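/- arXiv:1407.1569 — 9 statements merged into one kernel-verified Lean document; each statement's English description precedes it below -/
import Mathlib

section
/- Let n ≥ 1, let L ∈ ℝ^{n×n} be a symmetric positive semidefinite matrix with L·1 = 0 and rank n − 1, and let L⁺ be its Moore–Penrose pseudoinverse. Fix a node ℓ ∈ {1,…,n} and a real k > 0, and let e_ℓ be the ℓ-th standard basis vector. Then the matrix N = L + k·e_ℓ e_ℓᵀ is invertible and N⁻¹ = L⁺ − (L⁺ e_ℓ)1ᵀ − 1(e_ℓᵀ L⁺) + ((1 + k·L⁺_{ℓ,ℓ})/k)·1 1ᵀ, where 1 is the all-ones vector. In particular, N⁻¹_{i,j} = L⁺_{i,j} − L⁺_{i,ℓ} − L⁺_{j,ℓ} + L⁺_{ℓ,ℓ} + 1/k for all i, j. -/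
open Matrix

/-- For the Laplacian `L` of a connected undirected weighted graph, its
Moore–Penrose pseudoinverse `Lp`, a node `ℓ` and `k > 0`, the matrix
`N = L + k eₗ eₗᵀ` is invertible and
`N⁻¹ = L⁺ − (L⁺eₗ)1ᵀ − 1(eₗᵀL⁺) + ((1 + k L⁺ₗₗ)/k) 1 1ᵀ`; entrywise,
`N⁻¹ᵢⱼ = L⁺ᵢⱼ − L⁺ᵢₗ − L⁺ⱼₗ + L⁺ₗₗ + 1/k`. -/
theorem stmt_2 {n : ℕ} (hn : 1 ≤ n) (L Lp : Matrix (Fin n) (Fin n) ℝ)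
    (hL : L.PosSemidef) (hL1 : L *ᵥ (fun _ => (1 : ℝ)) = 0) (hrank : L.rank = n - 1)
    (hp1 : L * Lp * L = L) (hp2 : Lp * L * Lp = Lp)
    (hp3 : (L * Lp)ᵀ = L * Lp) (hp4 : (Lp * L)ᵀ = Lp * L)
    (ℓ : Fin n) (k : ℝ) (hk : 0 < k) :
    IsUnit (L + k • Matrix.single ℓ ℓ (1 : ℝ)) ∧
    (L + k • Matrix.single ℓ ℓ (1 : ℝ))⁻¹ =
      Lp - Matrix.of (fun i _ => Lp i ℓ) - Matrix.of (fun _ j => Lp ℓ j)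
        + ((1 + k * Lp ℓ ℓ) / k) • Matrix.of (fun _ _ => (1 : ℝ)) ∧
    ∀ i j, (L + k • Matrix.single ℓ ℓ (1 : ℝ))⁻¹ i j =
      Lp i j - Lp i ℓ - Lp j ℓ + Lp ℓ ℓ + 1 / k := by
  have hLT : Lᵀ = L := by
    have := hL.1; simpa [Matrix.IsHermitian, Matrix.conjTranspose_eq_transpose_of_trivial] using this
  -- hC1, hC2
  have hC1 : Lpᵀ * L = L * Lp := by
    calc Lpᵀ * L = Lpᵀ * Lᵀ := by rw [hLT]
    _ = (L * Lp)ᵀ := by rw [Matrix.transpose_mul]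
    _ = L * Lp := hp3
  have hC2 : L * Lpᵀ = Lp * L := by
    calc L * Lpᵀ = Lᵀ * Lpᵀ := by rw [hLT]
    _ = (Lp * L)ᵀ := by rw [Matrix.transpose_mul]
    _ = Lp * L := hp4
  have hcomm : L * Lp = Lp * L := by
    calc L * Lp = Lpᵀ * L := hC1.symm
    _ = Lpᵀ * (L * Lp * L) := by rw [hp1]
    _ = (Lpᵀ * L) * (Lp * L) := by simp only [Matrix.mul_assoc]
    _ = (L * Lp) * (L * Lpᵀ) := by rw [hC1, hC2]
    _ = (L * Lp * L) * Lpᵀ := by simp only [Matrix.mul_assoc]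
    _ = L * Lpᵀ := by rw [hp1]
    _ = Lp * L := hC2
  have hLpT : Lpᵀ = Lp := by
    calc Lpᵀ = (Lp * L * Lp)ᵀ := by rw [hp2]
    _ = Lpᵀ * (Lp * L)ᵀ := by rw [Matrix.transpose_mul]
    _ = Lpᵀ * (L * Lp) := by rw [hp4, hcomm]
    _ = (Lpᵀ * L) * Lp := by simp only [Matrix.mul_assoc]
    _ = (Lp * L) * Lp := by rw [hC1, hcomm]
    _ = Lp := hp2
  have hsumL : ∀ i, ∑ m, L i m = 0 := by
    intro i
    have := congrFun hL1 i
    simpa [Matrix.mulVec, dotProduct] using this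
  have hA : ∀ i j, (L * Lp) i j = (if i = j then 1 else 0) - (n : ℝ)⁻¹ := by
    have hn0 : (n : ℝ) ≠ 0 := Nat.cast_ne_zero.2 (by omega)
    -- kernel is span of ones
    have hker : ∀ v : Fin n → ℝ, L *ᵥ v = 0 → ∃ c : ℝ, ∀ i, v i = c := by
      have hu0 : (fun _ => (1:ℝ) : Fin n → ℝ) ≠ 0 := by
        intro h
        have := congrFun h ⟨0, by omega⟩
        simp at this
      have humem : (fun _ => (1:ℝ)) ∈ LinearMap.ker L.mulVecLin := by
        simpa [Matrix.mulVecLin_apply] using hL1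
      have hspan : Submodule.span ℝ {(fun _ => (1:ℝ) : Fin n → ℝ)} ≤ LinearMap.ker L.mulVecLin :=
        Submodule.span_le.2 (by simpa using humem)
      have hfr : Module.finrank ℝ (LinearMap.ker L.mulVecLin) = 1 := by
        have h1 := LinearMap.finrank_range_add_finrank_ker L.mulVecLin
        have h2 : Module.finrank ℝ (LinearMap.range L.mulVecLin) = n - 1 := hrank
        rw [h2, Module.finrank_fintype_fun_eq_card] at h1
        simp only [Fintype.card_fin] at h1
        omega
      have heq : Submodule.span ℝ {(fun _ => (1:ℝ) : Fin n → ℝ)} = LinearMap.ker L.mulVecLin :=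
        Submodule.eq_of_le_of_finrank_le hspan (by rw [hfr, finrank_span_singleton hu0])
      intro v hv
      have hv' : v ∈ Submodule.span ℝ {(fun _ => (1:ℝ) : Fin n → ℝ)} := by
        rw [heq]; simpa [Matrix.mulVecLin_apply] using hv
      obtain ⟨c, hc⟩ := Submodule.mem_span_singleton.1 hv'
      exact ⟨c, fun i => by rw [← hc]; simp⟩
    have hsumL : ∀ i, ∑ m, L i m = 0 := by
      intro i
      have := congrFun hL1 i
      simpa [Matrix.mulVec, dotProduct] using this
    -- Q := 1 - L * Lp
    set Q : Matrix (Fin n) (Fin n) ℝ := 1 - L * Lp with hQ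
    have hLLLp : L * (L * Lp) = L := by
      calc L * (L * Lp) = Lᵀ * (L * Lp)ᵀ := by rw [hLT, hp3]
      _ = ((L * Lp) * L)ᵀ := by rw [Matrix.transpose_mul (L * Lp) L]
      _ = Lᵀ := by rw [hp1]
      _ = L := hLT
    have hLQ : L * Q = 0 := by
      rw [hQ, Matrix.mul_sub, Matrix.mul_one, hLLLp, sub_self]
    have hQsym : ∀ i j, Q i j = Q j i := by
      intro i j
      have : Qᵀ = Q := by rw [hQ, Matrix.transpose_sub, Matrix.transpose_one, hp3]
      exact (congrFun (congrFun this j) i).symm ▸ rfl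
    have hQcol : ∀ i i' j, Q i j = Q i' j := by
      intro i i' j
      have hcol : L *ᵥ (fun m => Q m j) = 0 := by
        funext i''
        have := congrFun (congrFun hLQ i'') j
        simpa [Matrix.mul_apply, Matrix.mulVec, dotProduct] using this
      obtain ⟨c, hc⟩ := hker _ hcol
      rw [hc i, hc i']
    set i0 : Fin n := ⟨0, by omega⟩ with hi0
    have hQconst : ∀ i j, Q i j = Q i0 i0 := by
      intro i j
      rw [hQcol i i0 j, hQsym i0 j, hQcol j i0 i0]
    have hQu : Q *ᵥ (fun _ => (1:ℝ)) = (fun _ => (1:ℝ)) := by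
      have hC1 : Lpᵀ * L = L * Lp := by
        calc Lpᵀ * L = Lpᵀ * Lᵀ := by rw [hLT]
        _ = (L * Lp)ᵀ := by rw [Matrix.transpose_mul]
        _ = L * Lp := hp3
      have : (L * Lp) *ᵥ (fun _ => (1:ℝ)) = 0 := by
        rw [← hC1, ← Matrix.mulVec_mulVec, hL1, Matrix.mulVec_zero]
      rw [hQ, Matrix.sub_mulVec, this, Matrix.one_mulVec, sub_zero]
    have hQval : Q i0 i0 = (n : ℝ)⁻¹ := by
      have h1 : ∑ j, Q i0 j = 1 := by
        have := congrFun hQu i0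
        simpa [Matrix.mulVec, dotProduct] using this
      have h2 : ∑ j : Fin n, Q i0 j = n * Q i0 i0 := by
        rw [Finset.sum_congr rfl (fun j _ => hQconst i0 j)]
        simp [Finset.sum_const, mul_comm]
      rw [h2] at h1
      field_simp
      linarith [h1]
    intro i j
    have : Q i j = (n : ℝ)⁻¹ := by rw [hQconst i j, hQval]
    have h3 : Q i j = (if i = j then 1 else 0) - (L * Lp) i j := by
      simp [hQ, Matrix.one_apply]
    rw [h3] at this
    linarith [this]
  have hk0 : k ≠ 0 := ne_of_gt hk
  set c : ℝ := (1 + k * Lp ℓ ℓ) / k with hc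
  set M : Matrix (Fin n) (Fin n) ℝ :=
    Lp - Matrix.of (fun i _ => Lp i ℓ) - Matrix.of (fun _ j => Lp ℓ j)
      + c • Matrix.of (fun _ _ => (1 : ℝ)) with hM
  have hMentry : ∀ i j, M i j = Lp i j - Lp i ℓ - Lp ℓ j + c := by
    intro i j; simp [hM]
  have hNM : (L + k • Matrix.single ℓ ℓ (1 : ℝ)) * M = 1 := by
    ext i j
    rw [Matrix.mul_apply]
    have hterm : ∀ m, (L + k • Matrix.single ℓ ℓ (1 : ℝ)) i m * M m j
        = L i m * Lp m j - L i m * Lp m ℓ - L i m * Lp ℓ j + L i m * c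
          + (if ℓ = i ∧ ℓ = m then k * M m j else 0) := by
      intro m
      simp only [Matrix.add_apply, Matrix.smul_apply, Matrix.single, Matrix.of_apply,
        smul_eq_mul]
      by_cases h : ℓ = i ∧ ℓ = m
      · rw [if_pos h, if_pos h, hMentry m j]; ring
      · rw [if_neg h, if_neg h, hMentry m j]; ring
    rw [Finset.sum_congr rfl (fun m _ => hterm m)]
    rw [Finset.sum_add_distrib, Finset.sum_add_distrib, Finset.sum_sub_distrib,
      Finset.sum_sub_distrib]
    have e1 : ∑ m, L i m * Lp m j = (L * Lp) i j := (Matrix.mul_apply).symm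
    have e2 : ∑ m, L i m * Lp m ℓ = (L * Lp) i ℓ := (Matrix.mul_apply).symm
    have e3 : ∑ m, L i m * Lp ℓ j = 0 := by rw [← Finset.sum_mul, hsumL, zero_mul]
    have e4 : ∑ m, L i m * c = 0 := by rw [← Finset.sum_mul, hsumL, zero_mul]
    have e5 : (∑ m, if ℓ = i ∧ ℓ = m then k * M m j else 0)
        = if ℓ = i then k * M ℓ j else 0 := by
      by_cases h : ℓ = i
      · simp only [h, true_and, if_pos]
        rw [← h]
        exact Finset.sum_ite_eq Finset.univ ℓ (fun m => k * M m j)  |>.trans (by simp)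
      · simp [h]
    rw [e1, e2, e3, e4, e5, hMentry, hA, hA, Matrix.one_apply]
    have hinv : k * ((1 + k * Lp ℓ ℓ) / k) = 1 + k * Lp ℓ ℓ := by field_simp
    by_cases hil : ℓ = i
    · rw [if_pos hil, if_pos hil.symm]
      by_cases hij : i = j
      · rw [if_pos hij, hc, mul_add, mul_sub, mul_sub, hinv]; ring
      · rw [if_neg hij, hc, mul_add, mul_sub, mul_sub, hinv]; ring
    · rw [if_neg hil, if_neg (fun h : i = ℓ => hil h.symm)]
      by_cases hij : i = j
      · rw [if_pos hij]; ring
      · rw [if_neg hij]; ring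
  have hdet : IsUnit (L + k • Matrix.single ℓ ℓ (1 : ℝ)) := by
    rw [Matrix.isUnit_iff_isUnit_det]
    exact IsUnit.of_mul_eq_one M.det (by rw [← Matrix.det_mul, hNM, Matrix.det_one])
  have hinv : (L + k • Matrix.single ℓ ℓ (1 : ℝ))⁻¹ = M := Matrix.inv_eq_right_inv hNM
  refine ⟨hdet, hinv, fun i j => ?_⟩
  rw [hinv, hMentry]
  have hsymm : Lp ℓ j = Lp j ℓ := by
    conv_lhs => rw [← hLpT]
    rfl
  rw [hsymm, hc]
  field_simp
  ring
end

section
/- Let n ≥ 1, let L ∈ ℝ^{n×n} be a symmetric positive semidefinite matrix with L·1 = 0 and rank n − 1, and let L⁺ be its Moore–Penrose pseudoinverse. Fix a single leader node s ∈ {1,…,n} and a gain k > 0, and let E_{ss} be the n×n matrix with 1 in entry (s,s) and zeros elsewhere. Then L + k·E_{ss} is invertible and tr((L + k·E_{ss})⁻¹) = n/k + tr(L⁺) + n·L⁺_{s,s}. (Consequently the total system error with one noise-corrupted leader s equals (σ²/2)(n/k + tr(L⁺) + n·L⁺_{s,s}) = (nσ²/2)(1/k + 1/c_s), where 1/c_s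 = L⁺_{s,s} + tr(L⁺)/n is the reciprocal information centrality of s.) -/
open Matrix

/-- For the Laplacian `L` of a connected undirected weighted graph with
Moore–Penrose pseudoinverse `Lp`, a single leader node `s` and gain `k > 0`, the matrix
`L + k E_{ss}` is invertible and
`tr((L + k E_{ss})⁻¹) = n/k + tr(L⁺) + n L⁺_{s,s}`. -/
theorem stmt_3 {n : ℕ} (hn : 1 ≤ n) (L Lp : Matrix (Fin n) (Fin n) ℝ)
    (hL : L.PosSemidef) (hL1 : L *ᵥ (fun _ => (1 : ℝ)) = 0) (hrank : L.rank = n - 1)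
    (hp1 : L * Lp * L = L) (hp2 : Lp * L * Lp = Lp)
    (hp3 : (L * Lp)ᵀ = L * Lp) (hp4 : (Lp * L)ᵀ = Lp * L)
    (s : Fin n) (k : ℝ) (hk : 0 < k) :
    IsUnit (L + k • Matrix.single s s (1 : ℝ)) ∧
    ((L + k • Matrix.single s s (1 : ℝ))⁻¹).trace =
      (n : ℝ) / k + Lp.trace + (n : ℝ) * Lp s s := by
  have hnR : (0:ℝ) < (n:ℝ) := by exact_mod_cast hn
  have hLt : Lᵀ = L := by
    have := hL.1
    rw [Matrix.IsHermitian, Matrix.conjTranspose_eq_transpose_of_trivial] at this; exact this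
  have hrow : ∀ i, ∑ j, L i j = 0 := by
    intro i
    have := congrFun hL1 i
    simpa [Matrix.mulVec, dotProduct] using this
  have hcol : ∀ j, ∑ i, L i j = 0 := by
    intro j
    calc ∑ i, L i j = ∑ i, L j i := by
          refine Finset.sum_congr rfl fun i _ => ?_
          conv_lhs => rw [← hLt]
          rfl
      _ = 0 := hrow j
  -- Lp has zero row sums
  have hLp1 : Lp *ᵥ (fun _ => (1:ℝ)) = 0 := by
    have hLLp : L * Lp = Lpᵀ * L := by
      conv_lhs => rw [← hp3]
      rw [Matrix.transpose_mul, hLt]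
    calc Lp *ᵥ (fun _ => (1:ℝ)) = (Lp * (L * Lp)) *ᵥ (fun _ => (1:ℝ)) := by
          rw [← Matrix.mul_assoc, hp2]
      _ = ((Lp * Lpᵀ) * L) *ᵥ (fun _ => (1:ℝ)) := by rw [hLLp, Matrix.mul_assoc]
      _ = (Lp * Lpᵀ) *ᵥ (L *ᵥ (fun _ => (1:ℝ))) := (Matrix.mulVec_mulVec _ _ _).symm
      _ = 0 := by rw [hL1, Matrix.mulVec_zero]
  have hLprow : ∀ i, ∑ j, Lp i j = 0 := by
    intro i
    have := congrFun hLp1 i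
    simpa [Matrix.mulVec, dotProduct] using this
  -- Lp has zero column sums
  have hLpL' : Lp * L = L * Lpᵀ := by
    conv_lhs => rw [← hp4]
    rw [Matrix.transpose_mul, hLt]
  have hLpcol : ∀ j, ∑ i, Lp i j = 0 := by
    have hLp2 : Lp = L * (Lpᵀ * Lp) := by
      rw [← Matrix.mul_assoc, ← hLpL', hp2]
    intro j
    conv_lhs => rw [hLp2]
    rw [Finset.sum_congr rfl (fun i _ => Matrix.mul_apply)]
    rw [Finset.sum_comm]
    refine Finset.sum_eq_zero fun m _ => ?_
    rw [← Finset.sum_mul, hcol, zero_mul]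
  -- key: L * Lp = 1 - n⁻¹ • J
  set J : Matrix (Fin n) (Fin n) ℝ := Matrix.of (fun _ _ => (1:ℝ)) with hJ
  have hQ : L * Lp = 1 - (n:ℝ)⁻¹ • J := by
    set R : Matrix (Fin n) (Fin n) ℝ := 1 - (n:ℝ)⁻¹ • J - L * Lp with hR
    have hRL : R * L = 0 := by
      have hJL : J * L = 0 := by
        ext i j
        simp [hJ, Matrix.mul_apply, hcol j]
      rw [hR, Matrix.sub_mul, Matrix.sub_mul, Matrix.one_mul, Matrix.smul_mul, hJL,
        Matrix.mul_assoc, ← Matrix.mul_assoc, hp1]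
      simp
    have hR1 : R *ᵥ (fun _ => (1:ℝ)) = 0 := by
      rw [hR, Matrix.sub_mulVec, Matrix.sub_mulVec, Matrix.one_mulVec, ← Matrix.mulVec_mulVec,
        hLp1, Matrix.mulVec_zero]
      funext i
      simp [hJ, Matrix.mulVec, dotProduct, Matrix.smul_apply]
      field_simp
      norm_num
    -- R kills range(L) ⊔ span{1} = ⊤
    have htop : LinearMap.range L.mulVecLin ⊔
        Submodule.span ℝ {(fun _ => (1:ℝ) : Fin n → ℝ)} = ⊤ := by
      have hone : (fun _ => (1:ℝ) : Fin n → ℝ) ≠ 0 := by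
        intro h
        have := congrFun h ⟨0, hn⟩
        norm_num at this
      have hWrank : Module.finrank ℝ (Submodule.span ℝ {(fun _ => (1:ℝ) : Fin n → ℝ)}) = 1 :=
        finrank_span_singleton hone
      have hUrank : Module.finrank ℝ (LinearMap.range L.mulVecLin) = n - 1 := hrank
      have hinf : LinearMap.range L.mulVecLin ⊓
          Submodule.span ℝ {(fun _ => (1:ℝ) : Fin n → ℝ)} = ⊥ := by
        rw [Submodule.eq_bot_iff]
        rintro x ⟨hxU, hxW⟩
        obtain ⟨c, hc⟩ := Submodule.mem_span_singleton.mp hxW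
        obtain ⟨w, hw⟩ := hxU
        have h2 : ∑ i, x i = 0 := by
          rw [← hw]
          simp only [Matrix.mulVecLin_apply, Matrix.mulVec, dotProduct]
          rw [Finset.sum_comm]
          refine Finset.sum_eq_zero fun m _ => ?_
          rw [← Finset.sum_mul, hcol, zero_mul]
        have h1 : ∑ i, x i = (n:ℝ) * c := by
          rw [← hc]
          simp [Finset.sum_const, mul_comm]
        have hc0 : c = 0 := by
          rw [h2] at h1
          rcases mul_eq_zero.mp h1.symm with h | h
          · exact absurd h (ne_of_gt hnR)
          · exact h
        rw [← hc, hc0, zero_smul]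
      have := Submodule.finrank_sup_add_finrank_inf_eq (LinearMap.range L.mulVecLin)
        (Submodule.span ℝ {(fun _ => (1:ℝ) : Fin n → ℝ)})
      rw [hinf, hUrank, hWrank, finrank_bot] at this
      apply Submodule.eq_top_of_finrank_eq
      rw [Module.finrank_pi, Fintype.card_fin]
      omega
    have hRzero : ∀ v, R *ᵥ v = 0 := by
      intro v
      have hv : v ∈ LinearMap.range L.mulVecLin ⊔
          Submodule.span ℝ {(fun _ => (1:ℝ) : Fin n → ℝ)} := htop ▸ Submodule.mem_top
      obtain ⟨x, hx, y, hy, rfl⟩ := Submodule.mem_sup.mp hv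
      obtain ⟨w, rfl⟩ := hx
      obtain ⟨c, rfl⟩ := Submodule.mem_span_singleton.mp hy
      rw [Matrix.mulVec_add, Matrix.mulVecLin_apply, Matrix.mulVec_mulVec, hRL,
        Matrix.zero_mulVec, Matrix.mulVec_smul, hR1]
      simp
    have : R = 0 := by
      ext i j
      have := congrFun (hRzero (Pi.single j 1)) i
      rw [Matrix.mulVec_single] at this
      simpa using this
    rw [hR] at this
    -- 1 - n⁻¹ • J - L * Lp = 0
    have := sub_eq_zero.mp this
    exact this.symm
  have hQapp : ∀ i j, ∑ m, L i m * Lp m j = (if i = j then (1:ℝ) else 0) - (n:ℝ)⁻¹ := by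
    intro i j
    have := congrFun (congrFun hQ i) j
    rw [Matrix.mul_apply] at this
    simpa [Matrix.one_apply, hJ, Matrix.sub_apply, Matrix.smul_apply] using this
  -- explicit inverse
  set α : ℝ := k⁻¹ + Lp s s with hα
  set X : Matrix (Fin n) (Fin n) ℝ :=
    Matrix.of (fun i j => Lp i j - Lp i s - Lp s j + α) with hX
  set M : Matrix (Fin n) (Fin n) ℝ := L + k • Matrix.single s s (1:ℝ) with hM
  have hMX : M * X = 1 := by
    have hXs : ∀ j, X s j = k⁻¹ := by
      intro j; simp only [hX, Matrix.of_apply, hα]; ring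
    ext i j
    rw [Matrix.mul_apply]
    have expand : ∀ m, M i m * X m j
        = (L i m * Lp m j - L i m * Lp m s - L i m * Lp s j + L i m * α)
          + (if s = i ∧ s = m then k * k⁻¹ else 0) := by
      intro m
      rw [hM, Matrix.add_apply, Matrix.smul_apply, Matrix.single, Matrix.of_apply,
        smul_eq_mul]
      by_cases h2 : s = m
      · subst h2
        by_cases h1 : s = i <;> simp [h1, hX, hα] <;> ring
      · simp only [h2, and_false, if_false, hX, Matrix.of_apply]; ring
    rw [Finset.sum_congr rfl (fun m _ => expand m)]
    rw [Finset.sum_add_distrib, Finset.sum_add_distrib, Finset.sum_sub_distrib,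
      Finset.sum_sub_distrib]
    have t1 := hQapp i j
    have t2 := hQapp i s
    have t3 : ∑ m, L i m * Lp s j = 0 := by
      rw [← Finset.sum_mul, hrow]; ring
    have t4 : ∑ m, L i m * α = 0 := by
      rw [← Finset.sum_mul, hrow]; ring
    have t5 : ∑ m, (if s = i ∧ s = m then k * k⁻¹ else 0) = if i = s then 1 else 0 := by
      by_cases h1 : s = i
      · subst h1
        simp [mul_inv_cancel₀ (ne_of_gt hk)]
      · have h1' : ¬ i = s := fun h => h1 h.symm
        simp [h1, h1']
    rw [t1, t2, t3, t4, t5, Matrix.one_apply]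
    by_cases h : i = j <;> by_cases h2 : i = s <;> simp [h, h2]
  have hUnit : IsUnit M := by
    exact ⟨⟨M, X, hMX, mul_eq_one_comm.mp hMX⟩, rfl⟩
  refine ⟨hUnit, ?_⟩
  rw [Matrix.inv_eq_right_inv hMX]
  rw [Matrix.trace]
  have : ∀ i, X.diag i = Lp i i - Lp i s - Lp s i + α := fun i => rfl
  rw [Finset.sum_congr rfl (fun i _ => this i), Finset.sum_add_distrib,
    Finset.sum_sub_distrib, Finset.sum_sub_distrib]
  rw [hLpcol s, hLprow s]
  simp [Matrix.trace, Matrix.diag, hα]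
  field_simp
  ring
end

section
/- Let n ≥ 1, let L ∈ ℝ^{n×n} be a symmetric positive semidefinite matrix with L·1 = 0 and rank n − 1, and let L⁺ be its Moore–Penrose pseudoinverse. Fix a gain k > 0. Then a node s* ∈ {1,…,n} minimizes tr((L + k·E_{s,s})⁻¹) over all s ∈ {1,…,n} if and only if L⁺_{s*,s*} ≤ L⁺_{s,s} for all s, i.e., if and only if s* has maximal information centrality. The same characterization holds for the noise-free limit, i.e., for minimizing lim_{k→∞} tr((L + k·E_{s,s})⁻¹). -/
open Matrix Filter

section Aux
variable {n : ℕ}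

lemma aux_trace (hn : 1 ≤ n) (L Lp : Matrix (Fin n) (Fin n) ℝ)
    (hL : L.PosSemidef) (hL1 : L *ᵥ (fun _ => (1 : ℝ)) = 0) (hrank : L.rank = n - 1)
    (hp1 : L * Lp * L = L) (hp2 : Lp * L * Lp = Lp)
    (hp3 : (L * Lp)ᵀ = L * Lp) (hp4 : (Lp * L)ᵀ = Lp * L) :
    ∀ (s : Fin n) (κ : ℝ), κ ≠ 0 →
      ((L + κ • Matrix.single s s (1 : ℝ))⁻¹).trace
        = Lp.trace + n * Lp s s + n * κ⁻¹ := by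
  have hLsym : Lᵀ = L := by
    have := hL.isHermitian
    simpa [Matrix.IsHermitian, Matrix.conjTranspose_eq_transpose_of_trivial] using this
  -- row sums of L vanish
  have hrow : ∀ i, ∑ t, L i t = 0 := by
    intro i
    have := congrFun hL1 i
    simpa [Matrix.mulVec, dotProduct] using this
  -- (L * Lp) *ᵥ 1 = 0
  have hLLp1 : (L * Lp) *ᵥ (fun _ => (1 : ℝ)) = 0 := by
    have : L * Lp = Lpᵀ * Lᵀ := by rw [← Matrix.transpose_mul, hp3]
    rw [this, ← Matrix.mulVec_mulVec, hLsym, hL1, Matrix.mulVec_zero]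
  -- Lp *ᵥ 1 = 0 (row sums of Lp vanish)
  have hLp1 : ∀ i, ∑ t, Lp i t = 0 := by
    have h : Lp *ᵥ (fun _ => (1 : ℝ)) = 0 := by
      have : Lp = Lp * (L * Lp) := by rw [← Matrix.mul_assoc, hp2]
      rw [this, ← Matrix.mulVec_mulVec, hLLp1, Matrix.mulVec_zero]
    intro i
    have := congrFun h i
    simpa [Matrix.mulVec, dotProduct] using this
  -- column sums of Lp vanish
  have hLpcol : ∀ j, ∑ t, Lp t j = 0 := by
    have h : Lpᵀ *ᵥ (fun _ => (1 : ℝ)) = 0 := by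
      have hT : Lpᵀ = Lpᵀ * (Lp * L) := by
        rw [← hp4, ← Matrix.transpose_mul, Matrix.mul_assoc, ← Matrix.mul_assoc, hp2]
      rw [hT, ← Matrix.mulVec_mulVec, ← Matrix.mulVec_mulVec, hL1, Matrix.mulVec_zero,
        Matrix.mulVec_zero]
    intro j
    have := congrFun h j
    simpa [Matrix.mulVec, dotProduct, Matrix.transpose_apply] using this
  -- kernel of L is the span of the ones vector
  have hone_ne : (fun _ => (1 : ℝ) : Fin n → ℝ) ≠ 0 := by
    intro h
    have := congrFun h ⟨0, hn⟩
    norm_num at this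
  have hker : Submodule.span ℝ {(fun _ => (1 : ℝ) : Fin n → ℝ)} = LinearMap.ker L.mulVecLin := by
    have hle : Submodule.span ℝ {(fun _ => (1 : ℝ) : Fin n → ℝ)} ≤ LinearMap.ker L.mulVecLin := by
      rw [Submodule.span_le, Set.singleton_subset_iff]
      simpa [LinearMap.mem_ker, Matrix.mulVecLin_apply] using hL1
    refine Submodule.eq_of_le_of_finrank_eq hle ?_
    rw [finrank_span_singleton hone_ne]
    have hsum := LinearMap.finrank_range_add_finrank_ker L.mulVecLin
    rw [Module.finrank_pi, Fintype.card_fin] at hsum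
    have hr : Module.finrank ℝ (LinearMap.range L.mulVecLin) = n - 1 := hrank
    omega
  -- L * (1 - L*Lp) = 0
  have hQL : (1 - L * Lp) * L = 0 := by
    rw [Matrix.sub_mul, Matrix.one_mul, hp1, sub_self]
  have hLQ : L * (1 - L * Lp) = 0 := by
    have : (L * (1 - L * Lp))ᵀ = 0 := by
      rw [Matrix.transpose_mul, Matrix.transpose_sub, Matrix.transpose_one, hp3, hLsym, hQL]
    calc L * (1 - L * Lp) = ((L * (1 - L * Lp))ᵀ)ᵀ := (Matrix.transpose_transpose _).symm
      _ = 0 := by rw [this, Matrix.transpose_zero]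
  -- columns of Q are constant
  have hQconst : ∀ j, ∃ c : ℝ, ∀ i, (1 - L * Lp) i j = c := by
    intro j
    have hmem : (fun i => (1 - L * Lp) i j) ∈ LinearMap.ker L.mulVecLin := by
      rw [LinearMap.mem_ker, Matrix.mulVecLin_apply]
      funext i
      have : (L * (1 - L * Lp)) i j = 0 := by rw [hLQ]; rfl
      simpa [Matrix.mul_apply, Matrix.mulVec, dotProduct] using this
    rw [← hker, Submodule.mem_span_singleton] at hmem
    obtain ⟨c, hc⟩ := hmem
    exact ⟨c, fun i => by simpa using (congrFun hc i).symm⟩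
  -- all entries of 1 - L*Lp are equal
  set Q := (1 : Matrix (Fin n) (Fin n) ℝ) - L * Lp with hQdef
  have hQsym : ∀ i j, Q i j = Q j i := by
    intro i j
    have : Qᵀ = Q := by
      rw [hQdef, Matrix.transpose_sub, Matrix.transpose_one, hp3]
    have := congrFun (congrFun this i) j
    simpa [Matrix.transpose_apply] using this.symm
  set z : Fin n := ⟨0, hn⟩ with hz
  have hQall : ∀ i j, Q i j = Q z z := by
    intro i j
    obtain ⟨c1, hc1⟩ := hQconst j
    obtain ⟨c2, hc2⟩ := hQconst z
    calc Q i j = c1 := hc1 i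
      _ = Q z j := (hc1 z).symm
      _ = Q j z := hQsym z j
      _ = c2 := hc2 j
      _ = Q z z := (hc2 z).symm
  have hQrow : ∀ i, ∑ j, Q i j = 1 := by
    intro i
    have h0 : ∑ j, (L * Lp) i j = 0 := by
      have := congrFun hLLp1 i
      simpa [Matrix.mulVec, dotProduct] using this
    have h1 : ∑ j, (1 : Matrix (Fin n) (Fin n) ℝ) i j = 1 := by
      simp [Matrix.one_apply]
    calc ∑ j, Q i j = ∑ j, ((1 : Matrix (Fin n) (Fin n) ℝ) i j - (L * Lp) i j) := by
          refine Finset.sum_congr rfl fun j _ => ?_; rw [hQdef]; rfl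
      _ = 1 := by rw [Finset.sum_sub_distrib, h0, h1, sub_zero]
  have hnR : (0 : ℝ) < n := by exact_mod_cast hn
  have hQval : ∀ i j, Q i j = (n : ℝ)⁻¹ := by
    intro i j
    have hs : ∑ j', Q z j' = (n : ℝ) * Q z z := by
      calc ∑ j', Q z j' = ∑ _j' : Fin n, Q z z :=
            Finset.sum_congr rfl fun j' _ => hQall z j'
        _ = (n : ℝ) * Q z z := by
            rw [Finset.sum_const, Finset.card_univ, Fintype.card_fin, nsmul_eq_mul]
    have h1 : (n : ℝ) * Q z z = 1 := by rw [← hs, hQrow z]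
    rw [hQall i j]
    field_simp at h1 ⊢
    linarith
  have hLLpapply : ∀ i j, (L * Lp) i j = (if i = j then 1 else 0) - (n : ℝ)⁻¹ := by
    intro i j
    have := hQval i j
    rw [hQdef] at this
    have h2 : (1 : Matrix (Fin n) (Fin n) ℝ) i j - (L * Lp) i j = (n : ℝ)⁻¹ := by
      simpa [Matrix.sub_apply] using this
    rw [Matrix.one_apply] at h2
    linarith
  -- the explicit inverse
  intro s κ hκ
  set X : Matrix (Fin n) (Fin n) ℝ :=
    Matrix.of (fun i j => Lp i j - Lp s j - Lp i s + Lp s s + κ⁻¹) with hX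
  have hMX : (L + κ • Matrix.single s s (1 : ℝ)) * X = 1 := by
    ext i j
    rw [Matrix.add_mul, Matrix.add_apply, Matrix.smul_mul, Matrix.smul_apply]
    have hEX : (Matrix.single s s (1 : ℝ) * X) i j = if i = s then κ⁻¹ else 0 := by
      by_cases h : i = s
      · subst h
        rw [Matrix.single_mul_apply_same, if_pos rfl]
        simp [hX]
      · rw [Matrix.single_mul_apply_of_ne _ _ _ _ _ h, if_neg h]
    have hLX : (L * X) i j = (if i = j then 1 else 0) - (if i = s then 1 else 0) := by
      rw [Matrix.mul_apply]
      calc ∑ t, L i t * X t j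
          = ∑ t, (L i t * Lp t j - L i t * Lp t s + L i t * (Lp s s + κ⁻¹ - Lp s j)) := by
            refine Finset.sum_congr rfl fun t _ => ?_
            simp only [hX, Matrix.of_apply]; ring
        _ = (∑ t, L i t * Lp t j) - (∑ t, L i t * Lp t s)
              + (∑ t, L i t) * (Lp s s + κ⁻¹ - Lp s j) := by
            rw [Finset.sum_add_distrib, Finset.sum_sub_distrib, Finset.sum_mul]
        _ = (L * Lp) i j - (L * Lp) i s := by
            rw [← Matrix.mul_apply, ← Matrix.mul_apply, hrow, zero_mul, add_zero]
        _ = (if i = j then 1 else 0) - (if i = s then 1 else 0) := by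
            rw [hLLpapply, hLLpapply]; ring
    rw [hLX, hEX, Matrix.one_apply]
    have hcan : κ * κ⁻¹ = 1 := mul_inv_cancel₀ hκ
    split_ifs <;> simp [hcan]
  have hinv : (L + κ • Matrix.single s s (1 : ℝ))⁻¹ = X :=
    Matrix.inv_eq_right_inv hMX
  rw [hinv, Matrix.trace]
  have : ∀ i, X.diag i = Lp i i - Lp s i - Lp i s + (Lp s s + κ⁻¹) := by
    intro i; simp [Matrix.diag, hX]; ring
  calc ∑ i, X.diag i
      = ∑ i, (Lp i i - Lp s i - Lp i s + (Lp s s + κ⁻¹)) :=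
        Finset.sum_congr rfl fun i _ => this i
    _ = (∑ i, Lp i i) - (∑ i, Lp s i) - (∑ i, Lp i s)
          + (n : ℝ) * (Lp s s + κ⁻¹) := by
        rw [Finset.sum_add_distrib, Finset.sum_sub_distrib, Finset.sum_sub_distrib,
          Finset.sum_const, Finset.card_univ, Fintype.card_fin, nsmul_eq_mul]
    _ = Lp.trace + ↑n * Lp s s + ↑n * κ⁻¹ := by
        rw [hLp1 s, hLpcol s, Matrix.trace]; simp [Matrix.diag]; ring

end Aux

/-- For the Laplacian `L` of a connected undirected weighted graph with
Moore–Penrose pseudoinverse `Lp` and gain `k > 0`, a node `sstar` minimizes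
`tr((L + k E_{s,s})⁻¹)` over all nodes `s` iff `L⁺_{sstar,sstar} ≤ L⁺_{s,s}` for all `s`
(i.e., iff `sstar` has maximal information centrality); and the same characterization holds
for minimizing the noise-free limit `lim_{k→∞} tr((L + k E_{s,s})⁻¹)`. -/
theorem stmt_4 {n : ℕ} (hn : 1 ≤ n) (L Lp : Matrix (Fin n) (Fin n) ℝ)
    (hL : L.PosSemidef) (hL1 : L *ᵥ (fun _ => (1 : ℝ)) = 0) (hrank : L.rank = n - 1)
    (hp1 : L * Lp * L = L) (hp2 : Lp * L * Lp = Lp)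
    (hp3 : (L * Lp)ᵀ = L * Lp) (hp4 : (Lp * L)ᵀ = Lp * L)
    (k : ℝ) (hk : 0 < k) (sstar : Fin n) :
    ((∀ s : Fin n,
        ((L + k • Matrix.single sstar sstar (1 : ℝ))⁻¹).trace ≤
          ((L + k • Matrix.single s s (1 : ℝ))⁻¹).trace) ↔
      ∀ s : Fin n, Lp sstar sstar ≤ Lp s s) ∧
    ∀ Lim : Fin n → ℝ,
      (∀ s : Fin n,
        Tendsto (fun κ : ℝ => ((L + κ • Matrix.single s s (1 : ℝ))⁻¹).trace)
          atTop (nhds (Lim s))) →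
      ((∀ s : Fin n, Lim sstar ≤ Lim s) ↔ ∀ s : Fin n, Lp sstar sstar ≤ Lp s s) := by
  have key := aux_trace hn L Lp hL hL1 hrank hp1 hp2 hp3 hp4
  have hnR : (0 : ℝ) < n := by exact_mod_cast hn
  constructor
  · constructor
    · intro h s
      have hs := h s
      rw [key sstar k hk.ne', key s k hk.ne'] at hs
      nlinarith
    · intro h s
      rw [key sstar k hk.ne', key s k hk.ne']
      have := h s
      nlinarith
  · intro Lim hLim
    have hLimeq : ∀ s, Lim s = Lp.trace + n * Lp s s := by
      intro s
      have h1 : Tendsto (fun κ : ℝ => Lp.trace + ↑n * Lp s s + ↑n * κ⁻¹) atTop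
          (nhds (Lp.trace + ↑n * Lp s s + ↑n * 0)) :=
        tendsto_const_nhds.add (tendsto_inv_atTop_zero.const_mul _)
      have heq : (fun κ : ℝ => Lp.trace + ↑n * Lp s s + ↑n * κ⁻¹) =ᶠ[atTop]
          (fun κ : ℝ => ((L + κ • Matrix.single s s (1 : ℝ))⁻¹).trace) :=
        (eventually_gt_atTop 0).mono fun κ hκ => (key s κ hκ.ne').symm
      have h2 := tendsto_nhds_unique (hLim s) (h1.congr' heq)
      rw [h2, mul_zero, add_zero]
    constructor
    · intro h s
      have := h s
      rw [hLimeq sstar, hLimeq s] at this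
      nlinarith
    · intro h s
      rw [hLimeq sstar, hLimeq s]
      have := h s
      nlinarith
end

section
/- Let n ≥ 1, let L ∈ ℝ^{n×n} be a symmetric positive semidefinite matrix with L·1 = 0 and rank n − 1, and let L⁺ be its Moore–Penrose pseudoinverse. Fix a node s ∈ {1,…,n}. Then, as k → ∞, tr((L + k·E_{s,s})⁻¹) converges to tr(L⁺) + n·L⁺_{s,s}. (Hence the total system error with one noise-free leader s equals (σ²/2)(tr(L⁺) + n·L⁺_{s,s}) = (nσ²/2)(1/c_s).) -/
open Matrix Filter

/-- Uniqueness of the Moore–Penrose pseudoinverse. -/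
lemma stmt5_pinv_unique {n : ℕ} (A X Y : Matrix (Fin n) (Fin n) ℝ)
    (hx1 : A * X * A = A) (hx2 : X * A * X = X)
    (hx3 : (A * X)ᵀ = A * X) (hx4 : (X * A)ᵀ = X * A)
    (hy1 : A * Y * A = A) (hy3 : (A * Y)ᵀ = A * Y) (hy4 : (Y * A)ᵀ = Y * A)
    (hy2 : Y * A * Y = Y) : X = Y := by
  have hAX : A * X = A * Y := by
    calc A * X = (A * Y * A) * X := by rw [hy1]
      _ = (A * Y) * (A * X) := by simp only [Matrix.mul_assoc]
      _ = (A * Y)ᵀ * (A * X)ᵀ := by rw [hy3, hx3]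
      _ = ((A * X) * (A * Y))ᵀ := by rw [← Matrix.transpose_mul]
      _ = ((A * X * A) * Y)ᵀ := by simp only [Matrix.mul_assoc]
      _ = (A * Y)ᵀ := by rw [hx1]
      _ = A * Y := hy3
  have hXA : X * A = Y * A := by
    calc X * A = X * (A * Y * A) := by rw [hy1]
      _ = (X * A) * (Y * A) := by simp only [Matrix.mul_assoc]
      _ = (X * A)ᵀ * (Y * A)ᵀ := by rw [hx4, hy4]
      _ = ((Y * A) * (X * A))ᵀ := by rw [← Matrix.transpose_mul]
      _ = (Y * (A * X * A))ᵀ := by simp only [Matrix.mul_assoc]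
      _ = (Y * A)ᵀ := by rw [hx1]
      _ = Y * A := hy4
  calc X = X * A * X := hx2.symm
    _ = Y * A * X := by rw [hXA]
    _ = Y * (A * X) := Matrix.mul_assoc ..
    _ = Y * (A * Y) := by rw [hAX]
    _ = Y := by rw [← Matrix.mul_assoc, hy2]

/-- For the Laplacian `L` of a connected undirected weighted graph with
Moore–Penrose pseudoinverse `Lp` and a node `s`, as `k → ∞`,
`tr((L + k E_{s,s})⁻¹)` converges to `tr(L⁺) + n L⁺_{s,s}`. -/
theorem stmt_5 {n : ℕ} (hn : 1 ≤ n) (L Lp : Matrix (Fin n) (Fin n) ℝ)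
    (hL : L.PosSemidef) (hL1 : L *ᵥ (fun _ => (1 : ℝ)) = 0) (hrank : L.rank = n - 1)
    (hp1 : L * Lp * L = L) (hp2 : Lp * L * Lp = Lp)
    (hp3 : (L * Lp)ᵀ = L * Lp) (hp4 : (Lp * L)ᵀ = Lp * L)
    (s : Fin n) :
    Tendsto (fun k : ℝ => ((L + k • Matrix.single s s (1 : ℝ))⁻¹).trace)
      atTop (nhds (Lp.trace + (n : ℝ) * Lp s s)) := by
  have hnpos : (0 : ℝ) < n := by exact_mod_cast hn
  set J : Matrix (Fin n) (Fin n) ℝ := Matrix.of (fun _ _ => (1 : ℝ)) with hJdef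
  set E : Matrix (Fin n) (Fin n) ℝ := Matrix.single s s 1 with hEdef
  have hLsym : Lᵀ = L := by
    have := hL.1
    rwa [Matrix.IsHermitian, Matrix.conjTranspose_eq_transpose_of_trivial] at this
  have hJsym : Jᵀ = J := by ext i j; simp [hJdef]
  have hLJ : L * J = 0 := by
    ext i j
    have := congrFun hL1 i
    simpa [Matrix.mul_apply, Matrix.mulVec, dotProduct, hJdef] using this
  -- symmetry of the pseudoinverse
  have hLpsym : Lpᵀ = Lp := by
    refine stmt5_pinv_unique L Lpᵀ Lp ?_ ?_ ?_ ?_ hp1 hp3 hp4 hp2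
    · calc L * Lpᵀ * L = Lᵀ * Lpᵀ * Lᵀ := by rw [hLsym]
        _ = (L * (Lp * L))ᵀ := by simp [Matrix.transpose_mul, Matrix.mul_assoc]
        _ = L := by rw [← Matrix.mul_assoc, hp1, hLsym]
    · calc Lpᵀ * L * Lpᵀ = Lpᵀ * Lᵀ * Lpᵀ := by rw [hLsym]
        _ = (Lp * (L * Lp))ᵀ := by simp [Matrix.transpose_mul, Matrix.mul_assoc]
        _ = Lpᵀ := by rw [← Matrix.mul_assoc, hp2]
    · have e1 : L * Lpᵀ = Lp * L := by
        conv_lhs => rw [← hLsym]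
        rw [← Matrix.transpose_mul, hp4]
      rw [e1]; exact hp4
    · have e2 : Lpᵀ * L = L * Lp := by
        conv_lhs => rw [← hLsym]
        rw [← Matrix.transpose_mul, hp3]
      rw [e2]; exact hp3
  have hComm : L * Lp = Lp * L := by
    rw [← hp3, Matrix.transpose_mul, hLpsym, hLsym]
  have hLLpJ : L * Lp * J = 0 := by
    rw [hComm, Matrix.mul_assoc, hLJ, Matrix.mul_zero]
  have hLpJ : Lp * J = 0 := by
    calc Lp * J = (Lp * (L * Lp)) * J := by rw [← Matrix.mul_assoc, hp2]
      _ = Lp * ((L * Lp) * J) := by rw [Matrix.mul_assoc]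
      _ = 0 := by rw [hLLpJ, Matrix.mul_zero]
  have hJLp : J * Lp = 0 := by
    have h : (Lp * J)ᵀ = 0 := by rw [hLpJ]; simp
    rwa [Matrix.transpose_mul, hJsym, hLpsym] at h
  -- Q := L * Lp is the projection 1 - (1/n) J
  have hQQ : (L * Lp) * (L * Lp) = L * Lp := by
    rw [← Matrix.mul_assoc, hp1]
  have hrankQ : (L * Lp).rank = n - 1 := by
    refine le_antisymm ?_ ?_
    · exact hrank ▸ Matrix.rank_mul_le_left L Lp
    · calc n - 1 = L.rank := hrank.symm
        _ = ((L * Lp) * L).rank := by rw [hp1]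
        _ ≤ (L * Lp).rank := Matrix.rank_mul_le_left _ _
  have hker : LinearMap.ker (L * Lp).mulVecLin
      = Submodule.span ℝ {(fun _ => (1:ℝ) : Fin n → ℝ)} := by
    have hu0 : (fun _ => (1:ℝ) : Fin n → ℝ) ≠ 0 := by
      intro h
      have := congrFun h ⟨0, hn⟩
      simpa using this
    have humem : (fun _ => (1:ℝ) : Fin n → ℝ) ∈ LinearMap.ker (L * Lp).mulVecLin := by
      rw [LinearMap.mem_ker]
      show (L * Lp) *ᵥ (fun _ => (1:ℝ)) = 0
      funext i
      have := congrFun (congrFun hLLpJ i) i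
      simpa [Matrix.mul_apply, Matrix.mulVec, dotProduct, hJdef] using this
    have hle : Submodule.span ℝ {(fun _ => (1:ℝ) : Fin n → ℝ)}
        ≤ LinearMap.ker (L * Lp).mulVecLin :=
      (Submodule.span_singleton_le_iff_mem _ _).2 humem
    have hdim : Module.finrank ℝ (LinearMap.ker (L * Lp).mulVecLin) = 1 := by
      have hrn := LinearMap.finrank_range_add_finrank_ker (L * Lp).mulVecLin
      have hfr : Module.finrank ℝ (LinearMap.range (L * Lp).mulVecLin) = n - 1 := hrankQ
      rw [hfr, Module.finrank_fin_fun] at hrn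
      omega
    have hspan : Module.finrank ℝ
        (Submodule.span ℝ {(fun _ => (1:ℝ) : Fin n → ℝ)}) = 1 :=
      finrank_span_singleton hu0
    exact (Submodule.eq_of_le_of_finrank_le hle (by rw [hdim, hspan])).symm
  have hQ : L * Lp = 1 - ((n : ℝ))⁻¹ • J := by
    have hcol : ∀ j : Fin n, ∃ c : ℝ, ∀ i : Fin n, (1 - L * Lp) i j = c := by
      intro j
      have hv : (fun i => (1 - L * Lp) i j) ∈ LinearMap.ker (L * Lp).mulVecLin := by
        rw [LinearMap.mem_ker]
        show (L * Lp) *ᵥ (fun i => (1 - L * Lp) i j) = 0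
        funext i
        have h : ((L * Lp) * (1 - L * Lp)) i j = (0 : Matrix (Fin n) (Fin n) ℝ) i j := by
          rw [Matrix.mul_sub, Matrix.mul_one, hQQ, sub_self]
        simpa [Matrix.mul_apply, Matrix.mulVec, dotProduct] using h
      rw [hker, Submodule.mem_span_singleton] at hv
      obtain ⟨c, hc⟩ := hv
      exact ⟨c, fun i => by have := congrFun hc i; simpa using this.symm⟩
    choose c hc using hcol
    have hQsymm : ∀ i j, (L * Lp) i j = (L * Lp) j i := by
      intro i j
      conv_lhs => rw [← hp3]
      rfl
    have hone : ∀ i j : Fin n, (1 : Matrix (Fin n) (Fin n) ℝ) i j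
        = (1 : Matrix (Fin n) (Fin n) ℝ) j i := by
      intro i j
      by_cases h : i = j
      · subst h; rfl
      · simp [Matrix.one_apply, h, Ne.symm h]
    have hcsymm : ∀ i j : Fin n, c j = c i := by
      intro i j
      have h1 := hc j i
      have h2 := hc i j
      simp only [Matrix.sub_apply] at h1 h2
      have h3 := hQsymm i j
      have h4 := hone i j
      linarith
    have hrowQ : ∀ j : Fin n, ∑ k, (L * Lp) j k = 0 := by
      intro j
      have := congrFun (congrFun hLLpJ j) j
      simpa [Matrix.mul_apply, hJdef] using this
    have hcval : ∀ j : Fin n, c j = ((n : ℝ))⁻¹ := by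
      intro j
      have hsum : ∑ k : Fin n, (1 - L * Lp) j k = (n : ℝ) * c j := by
        calc ∑ k : Fin n, (1 - L * Lp) j k = ∑ k : Fin n, c j := by
              refine Finset.sum_congr rfl fun k _ => ?_
              rw [hc k j, hcsymm j k]
          _ = (n : ℝ) * c j := by simp [mul_comm]
      have hsum1 : ∑ k : Fin n, (1 - L * Lp) j k = 1 := by
        simp only [Matrix.sub_apply, Finset.sum_sub_distrib, hrowQ j, sub_zero]
        simp [Matrix.one_apply]
      field_simp
      linarith [hsum, hsum1]
    ext i j
    have h := hc j i
    simp only [Matrix.sub_apply] at h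
    rw [hcval j] at h
    simp only [Matrix.sub_apply, Matrix.smul_apply, hJdef, Matrix.of_apply, smul_eq_mul, mul_one]
    linarith
  -- entrywise product identities
  have hJEJ : J * E * J = J := by
    ext i j
    simp [Matrix.mul_apply, hJdef, hEdef, Matrix.single, ite_and]
  have hEJE : E * J * E = E := by
    ext i j
    rcases eq_or_ne j s with hj | hj
    · rcases eq_or_ne i s with hi | hi
      · rw [hi, hj]; simp [hEdef, hJdef]
      · rw [hj]; simp [hEdef, hJdef, hi, Ne.symm hi]
    · simp [hEdef, hj, Ne.symm hj]
  have hELpE : E * Lp * E = Lp s s • E := by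
    ext i j
    rcases eq_or_ne j s with hj | hj
    · rcases eq_or_ne i s with hi | hi
      · rw [hi, hj]; simp [hEdef]
      · rw [hj]; simp [hEdef, hi, Ne.symm hi]
    · simp [hEdef, hj, Ne.symm hj]
  have htrJ : J.trace = (n : ℝ) := by
    simp [Matrix.trace, Matrix.diag, hJdef]
  have htr1 : (Lp * E * J).trace = 0 := by
    rw [Matrix.trace_mul_cycle, hJLp, Matrix.zero_mul, Matrix.trace_zero]
  have htr2 : (J * E * Lp).trace = 0 := by
    rw [← Matrix.trace_mul_cycle, Matrix.mul_assoc, hLpJ, Matrix.mul_zero, Matrix.trace_zero]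
  -- trace formula for k ≥ 1
  have key : ∀ k : ℝ, 1 ≤ k →
      ((L + k • E)⁻¹).trace = Lp.trace + (Lp s s + k⁻¹) * n := by
    intro k hk
    have hk0 : k ≠ 0 := by linarith
    set X : Matrix (Fin n) (Fin n) ℝ :=
      Lp - Lp * E * J - J * E * Lp + (Lp s s + k⁻¹) • J with hXdef
    have hLX : L * X = 1 - E * J := by
      rw [hXdef]
      simp only [Matrix.mul_add, Matrix.mul_sub, Matrix.mul_smul, ← Matrix.mul_assoc]
      rw [hQ, hLJ]
      simp only [Matrix.sub_mul, Matrix.one_mul, Matrix.smul_mul, Matrix.zero_mul,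
        smul_zero, Matrix.mul_assoc]
      rw [show J * (E * J) = J from by rw [← Matrix.mul_assoc, hJEJ]]
      abel
    have hEX : E * X = k⁻¹ • (E * J) := by
      rw [hXdef]
      simp only [Matrix.mul_add, Matrix.mul_sub, Matrix.mul_smul, ← Matrix.mul_assoc]
      rw [hELpE, hEJE]
      simp only [Matrix.smul_mul]
      rw [add_smul]
      abel
    have hMX : (L + k • E) * X = 1 := by
      rw [Matrix.add_mul, Matrix.smul_mul, hLX, hEX, smul_smul, mul_inv_cancel₀ hk0, one_smul]
      abel
    rw [Matrix.inv_eq_right_inv hMX, hXdef]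
    rw [Matrix.trace_add, Matrix.trace_sub, Matrix.trace_sub, Matrix.trace_smul,
      htr1, htr2, htrJ]
    simp [smul_eq_mul]
  -- conclude via the limit
  have hEq : (fun k : ℝ => Lp.trace + (Lp s s + k⁻¹) * n)
      =ᶠ[atTop] (fun k : ℝ => ((L + k • E)⁻¹).trace) := by
    filter_upwards [eventually_ge_atTop (1 : ℝ)] with k hk
    exact (key k hk).symm
  have hTend : Tendsto (fun k : ℝ => Lp.trace + (Lp s s + k⁻¹) * n) atTop
      (nhds (Lp.trace + (n : ℝ) * Lp s s)) := by
    have h1 : Tendsto (fun k : ℝ => Lp.trace + (Lp s s + k⁻¹) * n) atTop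
        (nhds (Lp.trace + (Lp s s + 0) * n)) :=
      tendsto_const_nhds.add (((tendsto_const_nhds.add tendsto_inv_atTop_zero)).mul
        tendsto_const_nhds)
    have : Lp.trace + (Lp s s + 0) * n = Lp.trace + (n : ℝ) * Lp s s := by ring
    rwa [this] at h1
  exact hTend.congr' hEq
end

section
/- Let n ≥ 1, let L ∈ ℝ^{n×n} be a symmetric positive semidefinite matrix with L·1 = 0 and rank n − 1, and let L⁺ be its Moore–Penrose pseudoinverse. Fix two distinct nodes s₁ ≠ s₂ and a gain k > 0. Let r = L⁺_{s₁,s₁} + L⁺_{s₂,s₂} − 2L⁺_{s₁,s₂} be the resistance distance between s₁ and s₂, and let γ = (e_{s₁} − e_{s₂})ᵀ(L⁺)²(e_{s₁} − e_{s₂}) be the biharmonic distance squared between s₁ and s₂. Then L + k·E_{s₁,s₁} + k·E_{s₂,s₂} is invertible and tr((L + k·E_{s₁,s₁} + k·E_{s₂,s₂})⁻¹) = tr(L⁺) + [ n(1 + k(L⁺_{s₁,s₁} + L⁺_{s₂,s₂})) + n k²(L⁺_{s₁,s₁}L⁺_{s₂,s₂} − (L⁺_{s₁,s₂})²) − k²γ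 ] / ( k(2 + k r) ). -/
open Matrix

section SvxHelpers

variable {n : ℕ}

private lemma svx_mul_vmv (A : Matrix (Fin n) (Fin n) ℝ) (w p : Fin n → ℝ) :
    A * vecMulVec w p = vecMulVec (A *ᵥ w) p := by
  ext i j
  simp [mul_apply, vecMulVec_apply, mulVec, dotProduct, Finset.sum_mul, mul_assoc]

private lemma svx_vmv_mul (A : Matrix (Fin n) (Fin n) ℝ) (w p : Fin n → ℝ) :
    vecMulVec w p * A = vecMulVec w (p ᵥ* A) := by
  ext i j
  simp [mul_apply, vecMulVec_apply, vecMul, dotProduct, Finset.mul_sum, mul_assoc]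

private lemma svx_vmv_mulVec (w p x : Fin n → ℝ) : vecMulVec w p *ᵥ x = (p ⬝ᵥ x) • w := by
  ext i
  simp [mulVec, vecMulVec_apply, dotProduct, Finset.mul_sum, Finset.sum_mul, mul_assoc, mul_comm,
    mul_left_comm]

private lemma svx_vecMul_vmv (x w p : Fin n → ℝ) : x ᵥ* vecMulVec w p = (x ⬝ᵥ w) • p := by
  ext j
  simp [vecMul, vecMulVec_apply, dotProduct, Finset.sum_mul, mul_assoc]

private lemma svx_trace_vmv (w p : Fin n → ℝ) : (vecMulVec w p).trace = w ⬝ᵥ p := by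
  simp [trace, diag, vecMulVec_apply, dotProduct]

private lemma svx_vmv_add_left (w x p : Fin n → ℝ) :
    vecMulVec (w + x) p = vecMulVec w p + vecMulVec x p := by
  ext i j; simp [vecMulVec_apply, add_mul]

private lemma svx_vmv_add_right (w p q : Fin n → ℝ) :
    vecMulVec w (p + q) = vecMulVec w p + vecMulVec w q := by
  ext i j; simp [vecMulVec_apply, mul_add]

private lemma svx_vmv_sub_left (w x p : Fin n → ℝ) :
    vecMulVec (w - x) p = vecMulVec w p - vecMulVec x p := by
  ext i j; simp [vecMulVec_apply, sub_mul]

private lemma svx_vmv_sub_right (w p q : Fin n → ℝ) :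
    vecMulVec w (p - q) = vecMulVec w p - vecMulVec w q := by
  ext i j; simp [vecMulVec_apply, mul_sub]

private lemma svx_vmv_smul_left (c : ℝ) (w p : Fin n → ℝ) :
    vecMulVec (c • w) p = c • vecMulVec w p := by
  ext i j; simp [vecMulVec_apply, mul_assoc]

private lemma svx_vmv_smul_right (c : ℝ) (w p : Fin n → ℝ) :
    vecMulVec w (c • p) = c • vecMulVec w p := by
  ext i j; simp [vecMulVec_apply]; ring

private lemma svx_vmv_zero_left (p : Fin n → ℝ) : vecMulVec (0 : Fin n → ℝ) p = 0 := by
  ext i j; simp [vecMulVec_apply]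

private lemma svx_std (s : Fin n) : Matrix.single s s (1 : ℝ) =
    vecMulVec (Pi.single s 1) (Pi.single s 1) := by
  ext i j
  simp [Matrix.single, vecMulVec_apply, Pi.single_apply]
  aesop

end SvxHelpers

set_option maxHeartbeats 1000000 in
/-- Two noise-corrupted leaders. For the Laplacian `L` of a connected undirected
weighted graph with Moore–Penrose pseudoinverse `Lp`, distinct nodes `s₁ ≠ s₂` and gain `k > 0`,
with `r` the resistance distance and `γ` the biharmonic distance squared between `s₁` and `s₂`,
the matrix `L + k E_{s₁s₁} + k E_{s₂s₂}` is invertible and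
`tr((L + kE₁ + kE₂)⁻¹) = tr L⁺ + [n(1 + k(L⁺₁₁+L⁺₂₂)) + nk²(L⁺₁₁L⁺₂₂ − (L⁺₁₂)²) − k²γ]/(k(2+kr))`. -/
theorem stmt_6 {n : ℕ} (hn : 1 ≤ n) (L Lp : Matrix (Fin n) (Fin n) ℝ)
    (hL : L.PosSemidef) (hL1 : L *ᵥ (fun _ => (1 : ℝ)) = 0) (hrank : L.rank = n - 1)
    (hp1 : L * Lp * L = L) (hp2 : Lp * L * Lp = Lp)
    (hp3 : (L * Lp)ᵀ = L * Lp) (hp4 : (Lp * L)ᵀ = Lp * L)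
    (s₁ s₂ : Fin n) (hs : s₁ ≠ s₂) (k : ℝ) (hk : 0 < k)
    (r γ : ℝ)
    (hr : r = Lp s₁ s₁ + Lp s₂ s₂ - 2 * Lp s₁ s₂)
    (hγ : γ = (Pi.single s₁ 1 - Pi.single s₂ 1) ⬝ᵥ
      ((Lp * Lp) *ᵥ (Pi.single s₁ 1 - Pi.single s₂ 1))) :
    IsUnit (L + k • Matrix.single s₁ s₁ (1 : ℝ)
        + k • Matrix.single s₂ s₂ (1 : ℝ)) ∧
    ((L + k • Matrix.single s₁ s₁ (1 : ℝ)
        + k • Matrix.single s₂ s₂ (1 : ℝ))⁻¹).trace =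
      Lp.trace +
        ((n : ℝ) * (1 + k * (Lp s₁ s₁ + Lp s₂ s₂))
          + (n : ℝ) * k ^ 2 * (Lp s₁ s₁ * Lp s₂ s₂ - (Lp s₁ s₂) ^ 2)
          - k ^ 2 * γ) / (k * (2 + k * r)) := by
  classical
  have hnpos : 0 < n := hn
  have hn0 : (n:ℝ) ≠ 0 := Nat.cast_ne_zero.mpr (by omega)
  have hk0 : k ≠ 0 := hk.ne'
  have i0 : Fin n := ⟨0, hnpos⟩
  set one : Fin n → ℝ := fun _ => 1 with hone
  have hLsym : Lᵀ = L := by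
    have := hL.1
    simpa [Matrix.IsHermitian, conjTranspose_eq_transpose_of_trivial] using this
  have hLone : L *ᵥ one = 0 := hL1
  have honeL : one ᵥ* L = 0 := by
    rw [← hLsym, vecMul_transpose, hLone]
  have hLLp1 : (L * Lp) *ᵥ one = 0 := by
    rw [← vecMul_transpose, hp3, ← vecMul_vecMul, honeL, zero_vecMul]
  have hLp1 : Lp *ᵥ one = 0 := by
    calc Lp *ᵥ one = (Lp * (L * Lp)) *ᵥ one := by rw [← mul_assoc, hp2]
    _ = Lp *ᵥ ((L * Lp) *ᵥ one) := by rw [mulVec_mulVec]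
    _ = 0 := by rw [hLLp1, mulVec_zero]
  have hone_ne : one ≠ 0 := by
    intro h
    have := congrFun h i0
    simp [hone] at this
  -- kernel of L is the span of the all-ones vector
  have hker : LinearMap.ker L.mulVecLin = Submodule.span ℝ {one} := by
    symm
    have hle : Submodule.span ℝ {one} ≤ LinearMap.ker L.mulVecLin := by
      rw [Submodule.span_le, Set.singleton_subset_iff]
      simp [LinearMap.mem_ker, mulVecLin_apply, hLone]
    refine Submodule.eq_of_le_of_finrank_eq hle ?_
    have h2 := LinearMap.finrank_range_add_finrank_ker L.mulVecLin
    have h3 : Module.finrank ℝ (Fin n → ℝ) = n := by simp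
    have h4 : Module.finrank ℝ (LinearMap.range L.mulVecLin) = n - 1 := hrank
    rw [finrank_span_singleton hone_ne]
    omega
  have hkermem : ∀ x : Fin n → ℝ, L *ᵥ x = 0 → ∃ a : ℝ, x = a • one := by
    intro x hx
    have hx' : x ∈ LinearMap.ker L.mulVecLin := by
      simp [LinearMap.mem_ker, mulVecLin_apply, hx]
    rw [hker] at hx'
    obtain ⟨a, ha⟩ := Submodule.mem_span_singleton.mp hx'
    exact ⟨a, ha.symm⟩
  have hconst : ∀ N : Matrix (Fin n) (Fin n) ℝ, L * N = 0 → ∀ i i' j, N i j = N i' j := by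
    intro N hN i i' j
    have hcol : L *ᵥ (fun i => N i j) = 0 := by
      ext l
      have := congrFun (congrFun hN l) j
      simpa [mulVec, dotProduct, mul_apply] using this
    obtain ⟨a, ha⟩ := hkermem _ hcol
    have h1 := congrFun ha i
    have h2 := congrFun ha i'
    simp [hone] at h1 h2
    rw [h1, h2]
  -- any symmetric N with L * N = 0 and row sums 1 is (1/n) * J
  have hconstmat : ∀ N : Matrix (Fin n) (Fin n) ℝ, L * N = 0 → Nᵀ = N → N *ᵥ one = one →
      N = (n:ℝ)⁻¹ • vecMulVec one one := by
    intro N hLN hsym hrow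
    have hc := hconst N hLN
    have hval : ∀ i j, N i j = N i0 i0 := by
      intro i j
      rw [hc i i0 j]
      have h1 : N i0 j = N j i0 := by
        conv_lhs => rw [← hsym]
        rfl
      rw [h1, hc j i0 i0]
    have hsum : (n : ℝ) * N i0 i0 = 1 := by
      have := congrFun hrow i0
      simp only [mulVec, dotProduct, hone, mul_one] at this
      calc (n:ℝ) * N i0 i0 = ∑ _j : Fin n, N i0 i0 := by
            rw [Finset.sum_const, Finset.card_univ, Fintype.card_fin, nsmul_eq_mul]
      _ = ∑ j, N i0 j := Finset.sum_congr rfl fun j _ => (hval i0 j).symm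
      _ = 1 := this
    ext i j
    rw [hval i j]
    have : N i0 i0 = (n:ℝ)⁻¹ := by field_simp at hsum ⊢; linarith [hsum]
    simp [vecMulVec_apply, hone, this]
  have hQ' : (1 : Matrix (Fin n) (Fin n) ℝ) - Lp * L = (n:ℝ)⁻¹ • vecMulVec one one := by
    apply hconstmat
    · rw [mul_sub, mul_one, ← mul_assoc, hp1, sub_self]
    · rw [transpose_sub, transpose_one, hp4]
    · rw [sub_mulVec, one_mulVec, ← mulVec_mulVec, hLone, mulVec_zero, sub_zero]
  have hQ : (1 : Matrix (Fin n) (Fin n) ℝ) - L * Lp = (n:ℝ)⁻¹ • vecMulVec one one := by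
    have hsym : ((1 : Matrix (Fin n) (Fin n) ℝ) - L * Lp)ᵀ = 1 - L * Lp := by
      rw [transpose_sub, transpose_one, hp3]
    apply hconstmat _ ?_ hsym
    · rw [sub_mulVec, one_mulVec, ← mulVec_mulVec, hLp1, mulVec_zero, sub_zero]
    · have hNL : ((1 : Matrix (Fin n) (Fin n) ℝ) - L * Lp) * L = 0 := by
        rw [sub_mul, one_mul, mul_assoc, ← mul_assoc, hp1, sub_self]
      calc L * (1 - L * Lp) = L * (1 - L * Lp)ᵀ := by rw [hsym]
      _ = Lᵀ * (1 - L * Lp)ᵀ := by rw [hLsym]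
      _ = ((1 - L * Lp) * L)ᵀ := by rw [transpose_mul]
      _ = 0 := by rw [hNL, transpose_zero]
  have hLLp : L * Lp = 1 - (n:ℝ)⁻¹ • vecMulVec one one := by
    rw [← hQ, sub_sub_cancel]
  have hLpL : Lp * L = 1 - (n:ℝ)⁻¹ • vecMulVec one one := by
    rw [← hQ', sub_sub_cancel]
  -- Lp is symmetric
  have hLpsym : Lpᵀ = Lp := by
    have hLLpT : L * Lpᵀ = Lp * L := by
      calc L * Lpᵀ = Lᵀ * Lpᵀ := by rw [hLsym]
      _ = (Lp * L)ᵀ := by rw [transpose_mul]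
      _ = Lp * L := hp4
    have hLD : L * (Lp - Lpᵀ) = 0 := by
      rw [mul_sub, hLLpT, hLLp, hLpL, sub_self]
    have hc := hconst _ hLD
    have hanti : ∀ i j, (Lp - Lpᵀ) i j = -((Lp - Lpᵀ) j i) := by
      intro i j
      simp [Matrix.sub_apply, transpose_apply]
    have hzero : ∀ i j, (Lp - Lpᵀ) i j = 0 := by
      intro i j
      have h1 : (Lp - Lpᵀ) i j = (Lp - Lpᵀ) i0 j := hc i i0 j
      have h2 : (Lp - Lpᵀ) i0 j = -((Lp - Lpᵀ) j i0) := hanti i0 j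
      have h3 : (Lp - Lpᵀ) j i0 = (Lp - Lpᵀ) i0 i0 := hc j i0 i0
      have h4 : (Lp - Lpᵀ) i0 i0 = -((Lp - Lpᵀ) i0 i0) := hanti i0 i0
      have h5 : (Lp - Lpᵀ) i0 i0 = 0 := by linarith
      rw [h1, h2, h3, h5, neg_zero]
    have hD : Lp - Lpᵀ = 0 := by ext i j; exact hzero i j
    exact (sub_eq_zero.mp hD).symm
  have hsymE : ∀ i j, Lp i j = Lp j i := by
    intro i j
    have := congrFun (congrFun hLpsym j) i
    simpa [transpose_apply] using this
  -- set up vectors and dot product facts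
  set e1 : Fin n → ℝ := Pi.single s₁ 1 with he1
  set e2 : Fin n → ℝ := Pi.single s₂ 1 with he2
  set uu : Fin n → ℝ := Lp *ᵥ e1 with huu
  set vv : Fin n → ℝ := Lp *ᵥ e2 with hvv
  have huE : ∀ i, uu i = Lp i s₁ := by
    intro i; rw [huu, he1, mulVec_single]; simp
  have hvE : ∀ i, vv i = Lp i s₂ := by
    intro i; rw [hvv, he2, mulVec_single]; simp
  have hvmLp : ∀ w : Fin n → ℝ, w ᵥ* Lp = Lp *ᵥ w := by
    intro w
    conv_lhs => rw [← hLpsym, vecMul_transpose]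
  have hE1Lp : e1 ᵥ* Lp = uu := by
    funext j
    rw [he1, single_vecMul]
    simp [huE j, hsymE s₁ j]
  have hE2Lp : e2 ᵥ* Lp = vv := by
    funext j
    rw [he2, single_vecMul]
    simp [hvE j, hsymE s₂ j]
  have d_e1_one : e1 ⬝ᵥ one = 1 := by rw [he1, single_dotProduct]; simp [hone]
  have d_e2_one : e2 ⬝ᵥ one = 1 := by rw [he2, single_dotProduct]; simp [hone]
  have d_one_e1 : one ⬝ᵥ e1 = 1 := by rw [he1, dotProduct_single]; simp [hone]
  have d_one_e2 : one ⬝ᵥ e2 = 1 := by rw [he2, dotProduct_single]; simp [hone]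
  have d_e1_u : e1 ⬝ᵥ uu = Lp s₁ s₁ := by rw [he1, single_dotProduct]; simp [huE]
  have d_e1_v : e1 ⬝ᵥ vv = Lp s₁ s₂ := by rw [he1, single_dotProduct]; simp [hvE]
  have d_e2_u : e2 ⬝ᵥ uu = Lp s₁ s₂ := by
    rw [he2, single_dotProduct]; simp [huE, hsymE s₂ s₁]
  have d_e2_v : e2 ⬝ᵥ vv = Lp s₂ s₂ := by rw [he2, single_dotProduct]; simp [hvE]
  have d_one_one : one ⬝ᵥ one = (n : ℝ) := by simp [hone, dotProduct]
  have honeLp : one ᵥ* Lp = 0 := by rw [hvmLp, hLp1]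
  have d_one_u : one ⬝ᵥ uu = 0 := by rw [huu, dotProduct_mulVec, honeLp, zero_dotProduct]
  have d_one_v : one ⬝ᵥ vv = 0 := by rw [hvv, dotProduct_mulVec, honeLp, zero_dotProduct]
  have d_u_one : uu ⬝ᵥ one = 0 := by rw [dotProduct_comm]; exact d_one_u
  have d_v_one : vv ⬝ᵥ one = 0 := by rw [dotProduct_comm]; exact d_one_v
  have hLu : L *ᵥ uu = e1 - (n:ℝ)⁻¹ • one := by
    rw [huu, mulVec_mulVec, hLLp, sub_mulVec, one_mulVec, smul_mulVec, svx_vmv_mulVec,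
      d_one_e1, one_smul]
  have hLv : L *ᵥ vv = e2 - (n:ℝ)⁻¹ • one := by
    rw [hvv, mulVec_mulVec, hLLp, sub_mulVec, one_mulVec, smul_mulVec, svx_vmv_mulVec,
      d_one_e2, one_smul]
  -- Lp is positive semidefinite in the quadratic-form sense
  have hpsd : ∀ w : Fin n → ℝ, 0 ≤ w ⬝ᵥ (Lp *ᵥ w) := by
    intro w
    have h0 : 0 ≤ (Lp *ᵥ w) ⬝ᵥ (L *ᵥ (Lp *ᵥ w)) := by
      have := hL.dotProduct_mulVec_nonneg (Lp *ᵥ w); rwa [star_trivial] at this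
    calc (0:ℝ) ≤ (Lp *ᵥ w) ⬝ᵥ (L *ᵥ (Lp *ᵥ w)) := h0
    _ = (w ᵥ* Lp) ⬝ᵥ (L *ᵥ (Lp *ᵥ w)) := by rw [hvmLp]
    _ = w ⬝ᵥ (Lp *ᵥ (L *ᵥ (Lp *ᵥ w))) := (dotProduct_mulVec w Lp _).symm
    _ = w ⬝ᵥ ((Lp * L * Lp) *ᵥ w) := by rw [mulVec_mulVec, mulVec_mulVec]
    _ = w ⬝ᵥ (Lp *ᵥ w) := by rw [hp2]
  have hLpsub : Lp *ᵥ (e1 - e2) = uu - vv := by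
    rw [mulVec_sub, huu, hvv]
  have hr_eq : r = (e1 - e2) ⬝ᵥ (Lp *ᵥ (e1 - e2)) := by
    rw [hLpsub, sub_dotProduct, dotProduct_sub, dotProduct_sub, d_e1_u, d_e1_v, d_e2_u, d_e2_v,
      hr]
    ring
  have hr0 : 0 ≤ r := by rw [hr_eq]; exact hpsd _
  have hd0 : 2 + k * r ≠ 0 := by nlinarith
  have hγ' : γ = (uu - vv) ⬝ᵥ (uu - vv) := by
    rw [hγ, ← mulVec_mulVec, hLpsub, dotProduct_mulVec, hvmLp, hLpsub]
  have hstd1 : Matrix.single s₁ s₁ (1:ℝ) = vecMulVec e1 e1 := by rw [he1]; exact svx_std s₁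
  have hstd2 : Matrix.single s₂ s₂ (1:ℝ) = vecMulVec e2 e2 := by rw [he2]; exact svx_std s₂
  clear_value one e1 e2 uu vv
  -- the explicit inverse
  have hMX : (L + k • Matrix.single s₁ s₁ (1 : ℝ)
        + k • Matrix.single s₂ s₂ (1 : ℝ)) *
      (Lp + vecMulVec one
          ((-1:ℝ) • uu + ((2+k*r)⁻¹ * (1 + k*Lp s₁ s₁ - k*Lp s₁ s₂)) • (uu - vv)
            + ((2+k*r)⁻¹ * k⁻¹ * ((1+k*Lp s₁ s₁)*(1+k*Lp s₂ s₂)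
                - (k*Lp s₁ s₂)*(k*Lp s₁ s₂))) • one)
        + vecMulVec uu
          ((-((2+k*r)⁻¹ * k)) • (uu - vv) + (-((2+k*r)⁻¹ * (1 + k*Lp s₂ s₂ - k*Lp s₁ s₂))) • one)
        + vecMulVec vv
          (((2+k*r)⁻¹ * k) • (uu - vv) + (-((2+k*r)⁻¹ * (1 + k*Lp s₁ s₁ - k*Lp s₁ s₂))) • one))
      = 1 := by
    have hd0' : 2 + k * (Lp s₁ s₁ + Lp s₂ s₂ - 2 * Lp s₁ s₂) ≠ 0 := by rw [← hr]; exact hd0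
    rw [hstd1, hstd2, hr]
    simp only [Matrix.add_mul, Matrix.mul_add, Matrix.smul_mul, smul_add]
    simp only [svx_vmv_mul, svx_vecMul_vmv, hE1Lp, hE2Lp]
    simp only [svx_mul_vmv, hLone, hLu, hLv, svx_vmv_zero_left, hLLp]
    simp only [d_e1_one, d_e2_one, d_one_e1, d_one_e2, d_e1_u, d_e1_v, d_e2_u, d_e2_v,
      d_one_one, d_one_u, d_one_v, d_u_one, d_v_one, one_smul]
    simp only [svx_vmv_sub_left, svx_vmv_add_left, svx_vmv_smul_left]
    simp only [svx_vmv_add_right, svx_vmv_sub_right, svx_vmv_smul_right]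
    match_scalars <;> field_simp <;> ring
  refine ⟨?_, ?_⟩
  · exact (isUnit_iff_isUnit_det _).mpr
      (IsUnit.of_mul_eq_one _ (by rw [← det_mul, hMX, det_one]))
  · rw [inv_eq_right_inv hMX]
    have d_vu : vv ⬝ᵥ uu = uu ⬝ᵥ vv := dotProduct_comm _ _
    have hγ'' : γ = uu ⬝ᵥ uu - 2 * (uu ⬝ᵥ vv) + vv ⬝ᵥ vv := by
      rw [hγ', sub_dotProduct, dotProduct_sub, dotProduct_sub, d_vu]
      ring
    rw [trace_add, trace_add, trace_add, svx_trace_vmv, svx_trace_vmv, svx_trace_vmv, hγ'']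
    simp only [dotProduct_add, dotProduct_sub, dotProduct_smul, smul_eq_mul,
      d_one_one, d_one_u, d_one_v, d_u_one, d_v_one, d_vu]
    field_simp
    ring
end

section
/- Let n ≥ 1, let L ∈ ℝ^{n×n} be a symmetric positive semidefinite matrix with L·1 = 0 and rank n − 1, and let L⁺ be its Moore–Penrose pseudoinverse. Fix two distinct nodes s₁ ≠ s₂, let r = L⁺_{s₁,s₁} + L⁺_{s₂,s₂} − 2L⁺_{s₁,s₂} and γ = (e_{s₁} − e_{s₂})ᵀ(L⁺)²(e_{s₁} − e_{s₂}). Then, as k → ∞, tr((L + k·E_{s₁,s₁} + k·E_{s₂,s₂})⁻¹) converges to tr(L⁺) + [ n(L⁺_{s₁,s₁}L⁺_{s₂,s₂} − (L⁺_{s₁,s₂})²) − γ ] / r. (This is the total system error, up to the factor σ²/2, with two noise-free leaders s₁ and s₂.) -/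
open Matrix Filter

section Aux
variable {n : ℕ}

lemma aux_pinv_symm (L Lp : Matrix (Fin n) (Fin n) ℝ) (hLt : Lᵀ = L)
    (hp1 : L * Lp * L = L) (hp2 : Lp * L * Lp = Lp)
    (hp3 : (L * Lp)ᵀ = L * Lp) (hp4 : (Lp * L)ᵀ = Lp * L) : Lpᵀ = Lp := by
  set C := Lpᵀ with hC
  have hACA : L * C * L = L := by
    have := congrArg transpose hp1
    simpa [transpose_mul, hLt, Matrix.mul_assoc] using this
  have hACs : L * C = Lp * L := by
    calc L * C = Lᵀ * Lpᵀ := by rw [hLt]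
    _ = (Lp * L)ᵀ := (transpose_mul _ _).symm
    _ = Lp * L := hp4
  have hCAs : C * L = L * Lp := by
    calc C * L = Lpᵀ * Lᵀ := by rw [hLt]
    _ = (L * Lp)ᵀ := (transpose_mul _ _).symm
    _ = L * Lp := hp3
  have hACsym : (L * C)ᵀ = L * C := by rw [hACs, hp4]
  have hCAsym : (C * L)ᵀ = C * L := by rw [hCAs, hp3]
  have hCAC : C * L * C = C := by
    have := congrArg transpose hp2
    simpa [transpose_mul, hLt, Matrix.mul_assoc] using this
  -- AB = AC
  have e1 : L * Lp = (L * C) * (L * Lp) := by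
    rw [show (L * C) * (L * Lp) = (L * C * L) * Lp by simp [Matrix.mul_assoc], hACA]
  have h1 : L * Lp = L * C := by
    calc L * Lp = (L * Lp)ᵀ := hp3.symm
    _ = ((L * C) * (L * Lp))ᵀ := by rw [← e1]
    _ = (L * Lp)ᵀ * (L * C)ᵀ := transpose_mul _ _
    _ = (L * Lp) * (L * C) := by rw [hp3, hACsym]
    _ = (L * Lp * L) * C := by simp [Matrix.mul_assoc]
    _ = L * C := by rw [hp1]
  -- BA = CA
  have e2 : Lp * L = (Lp * L) * (C * L) := by
    rw [show (Lp * L) * (C * L) = Lp * (L * C * L) by simp [Matrix.mul_assoc], hACA]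
  have h2 : Lp * L = C * L := by
    calc Lp * L = (Lp * L)ᵀ := hp4.symm
    _ = ((Lp * L) * (C * L))ᵀ := by rw [← e2]
    _ = (C * L)ᵀ * (Lp * L)ᵀ := transpose_mul _ _
    _ = (C * L) * (Lp * L) := by rw [hp4, hCAsym]
    _ = C * (L * Lp * L) := by simp [Matrix.mul_assoc]
    _ = C * L := by rw [hp1]
  calc Lpᵀ = C := rfl
  _ = C * L * C := hCAC.symm
  _ = (Lp * L) * C := by rw [← h2]
  _ = Lp * (L * C) := by rw [Matrix.mul_assoc]
  _ = Lp * (L * Lp) := by rw [← h1]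
  _ = Lp := by rw [← Matrix.mul_assoc, hp2]

lemma aux_proj {n : ℕ} (hn : 1 ≤ n) (L Lp : Matrix (Fin n) (Fin n) ℝ)
    (hLt : Lᵀ = L) (hL1 : L *ᵥ (fun _ => (1 : ℝ)) = 0) (hrank : L.rank = n - 1)
    (hp1 : L * Lp * L = L) (hp3 : (L * Lp)ᵀ = L * Lp) :
    L * Lp = 1 - ((n : ℝ)⁻¹) • (Matrix.of fun _ _ => (1 : ℝ)) := by
  set o : Fin n → ℝ := fun _ => (1 : ℝ) with ho
  have hn0 : (n : ℝ) ≠ 0 := Nat.cast_ne_zero.mpr (by omega)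
  have hoL : o ᵥ* L = 0 := by
    rw [← hLt, Matrix.vecMul_transpose, hL1]
  set J : Matrix (Fin n) (Fin n) ℝ := Matrix.of fun _ _ => (1 : ℝ) with hJ
  have ho0 : o ≠ 0 := by
    intro h
    have := congrFun h ⟨0, by omega⟩
    simp [ho] at this
  set Ur := LinearMap.range L.mulVecLin with hUrdef
  have hUr : Module.finrank ℝ Ur = n - 1 := hrank
  set W := (ℝ ∙ o) with hWdef
  have hWr : Module.finrank ℝ W = 1 := finrank_span_singleton ho0
  have horth : ∀ x ∈ Ur, o ⬝ᵥ x = 0 := by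
    rintro x ⟨y, rfl⟩
    rw [Matrix.mulVecLin_apply, Matrix.dotProduct_mulVec, hoL, zero_dotProduct]
  have hoo : o ⬝ᵥ o = (n : ℝ) := by simp [ho, dotProduct]
  have hdisj : Ur ⊓ W = ⊥ := by
    rw [Submodule.eq_bot_iff]
    rintro x ⟨hxU, hxW⟩
    obtain ⟨t, rfl⟩ := Submodule.mem_span_singleton.mp hxW
    have h0 := horth _ hxU
    rw [dotProduct_smul, hoo, smul_eq_mul] at h0
    have : t = 0 := by
      rcases mul_eq_zero.mp h0 with h | h
      · exact h
      · exact absurd h hn0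
    simp [this]
  have hsup : Ur ⊔ W = ⊤ := by
    apply Submodule.eq_top_of_finrank_eq
    have h := Submodule.finrank_sup_add_finrank_inf_eq Ur W
    rw [hdisj] at h
    simp only [finrank_bot, add_zero] at h
    rw [h, hUr, hWr, Module.finrank_fin_fun]
    omega
  have hPo : (L * Lp) *ᵥ o = 0 := by
    rw [← hp3, Matrix.mulVec_transpose, ← Matrix.vecMul_vecMul, hoL, Matrix.zero_vecMul]
  have hJL : J * L = 0 := by
    ext i j
    have := congrFun hoL j
    simpa [hJ, Matrix.mul_apply, Matrix.vecMul, dotProduct, ho] using this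
  have hJo : J *ᵥ o = (n : ℝ) • o := by
    ext i
    simp [hJ, Matrix.mulVec, dotProduct, ho]
  have hx : ∀ x, (L * Lp) *ᵥ x = (1 - (n : ℝ)⁻¹ • J) *ᵥ x := by
    intro x
    have hxm : x ∈ Ur ⊔ W := hsup ▸ Submodule.mem_top
    rw [Submodule.mem_sup] at hxm
    obtain ⟨u, hu, w, hw, rfl⟩ := hxm
    obtain ⟨y, rfl⟩ := hu
    obtain ⟨t, rfl⟩ := Submodule.mem_span_singleton.mp hw
    rw [Matrix.mulVecLin_apply]
    rw [Matrix.mulVec_add, Matrix.mulVec_add, Matrix.mulVec_smul, Matrix.mulVec_smul,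
      hPo, Matrix.mulVec_mulVec, hp1]
    rw [Matrix.sub_mulVec, Matrix.sub_mulVec, Matrix.one_mulVec, Matrix.one_mulVec,
      Matrix.smul_mulVec, Matrix.smul_mulVec, Matrix.mulVec_mulVec, hJL, hJo]
    simp [smul_smul, inv_mul_cancel₀ hn0]
  ext i j
  have h := congrFun (hx (Pi.single j 1)) i
  rw [Matrix.mulVec_single, Matrix.mulVec_single] at h
  simpa using h

end Aux

set_option maxHeartbeats 2000000

/-- Two noise-free leaders. For the Laplacian `L` of a connected undirected
weighted graph with Moore–Penrose pseudoinverse `Lp`, distinct nodes `s₁ ≠ s₂`, with `r` the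
resistance distance and `γ` the biharmonic distance squared between them, as `k → ∞`,
`tr((L + kE_{s₁s₁} + kE_{s₂s₂})⁻¹)` converges to
`tr L⁺ + (n(L⁺₁₁L⁺₂₂ − (L⁺₁₂)²) − γ)/r`. -/
theorem stmt_7 {n : ℕ} (hn : 1 ≤ n) (L Lp : Matrix (Fin n) (Fin n) ℝ)
    (hL : L.PosSemidef) (hL1 : L *ᵥ (fun _ => (1 : ℝ)) = 0) (hrank : L.rank = n - 1)
    (hp1 : L * Lp * L = L) (hp2 : Lp * L * Lp = Lp)
    (hp3 : (L * Lp)ᵀ = L * Lp) (hp4 : (Lp * L)ᵀ = Lp * L)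
    (s₁ s₂ : Fin n) (hs : s₁ ≠ s₂)
    (r γ : ℝ)
    (hr : r = Lp s₁ s₁ + Lp s₂ s₂ - 2 * Lp s₁ s₂)
    (hγ : γ = (Pi.single s₁ 1 - Pi.single s₂ 1) ⬝ᵥ
      ((Lp * Lp) *ᵥ (Pi.single s₁ 1 - Pi.single s₂ 1))) :
    Tendsto (fun k : ℝ =>
        ((L + k • Matrix.single s₁ s₁ (1 : ℝ)
          + k • Matrix.single s₂ s₂ (1 : ℝ))⁻¹).trace)
      atTop
      (nhds (Lp.trace +
        ((n : ℝ) * (Lp s₁ s₁ * Lp s₂ s₂ - (Lp s₁ s₂) ^ 2) - γ) / r)) := by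
  have hn0 : (n : ℝ) ≠ 0 := Nat.cast_ne_zero.mpr (by omega)
  have hLt : Lᵀ = L := by
    have := hL.1
    rwa [Matrix.IsHermitian, Matrix.conjTranspose_eq_transpose_of_trivial] at this
  have hLpt : Lpᵀ = Lp := aux_pinv_symm L Lp hLt hp1 hp2 hp3 hp4
  set c : ℝ := (n : ℝ)⁻¹ with hc
  set o : Fin n → ℝ := fun _ => (1 : ℝ) with ho
  set J : Matrix (Fin n) (Fin n) ℝ := Matrix.of fun _ _ => (1 : ℝ) with hJdef
  have hPQ : L * Lp = 1 - c • J := aux_proj hn L Lp hLt hL1 hrank hp1 hp3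
  have hQP : Lp * L = 1 - c • J := by
    calc Lp * L = (Lp * L)ᵀ := hp4.symm
    _ = Lᵀ * Lpᵀ := transpose_mul _ _
    _ = L * Lp := by rw [hLt, hLpt]
    _ = 1 - c • J := hPQ
  have hoL : o ᵥ* L = 0 := by rw [← hLt, Matrix.vecMul_transpose, hL1]
  have hJo : J *ᵥ o = (n : ℝ) • o := by
    ext i; simp [hJdef, Matrix.mulVec, dotProduct, ho]
  have hQo : (1 - c • J) *ᵥ o = 0 := by
    rw [Matrix.sub_mulVec, Matrix.one_mulVec, Matrix.smul_mulVec, hJo]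
    simp [smul_smul, hc, inv_mul_cancel₀ hn0, ho]
  have hLpo : Lp *ᵥ o = 0 := by
    have h2 : Lp = Lp * (L * Lp) := by rw [← Matrix.mul_assoc, hp2]
    calc Lp *ᵥ o = (Lp * (L * Lp)) *ᵥ o := by rw [← h2]
    _ = Lp *ᵥ ((L * Lp) *ᵥ o) := by rw [← Matrix.mulVec_mulVec]
    _ = Lp *ᵥ 0 := by rw [hPQ, hQo]
    _ = 0 := Matrix.mulVec_zero _
  have hoLp : o ᵥ* Lp = 0 := by rw [← hLpt, Matrix.vecMul_transpose, hLpo]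
  -- J products
  have hLJ : L * J = 0 := by
    ext i j
    have := congrFun hL1 i
    simpa [hJdef, Matrix.mul_apply, Matrix.mulVec, dotProduct, ho] using this
  have hJL : J * L = 0 := by
    ext i j
    have := congrFun hoL j
    simpa [hJdef, Matrix.mul_apply, Matrix.vecMul, dotProduct, ho] using this
  have hLpJ : Lp * J = 0 := by
    ext i j
    have := congrFun hLpo i
    simpa [hJdef, Matrix.mul_apply, Matrix.mulVec, dotProduct, ho] using this
  have hJLp : J * Lp = 0 := by
    ext i j
    have := congrFun hoLp j
    simpa [hJdef, Matrix.mul_apply, Matrix.vecMul, dotProduct, ho] using this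
  have hJJ : J * J = (n : ℝ) • J := by
    ext i j; simp [hJdef, Matrix.mul_apply]
  -- A and its inverse
  set A : Matrix (Fin n) (Fin n) ℝ := L + c • J with hAdef
  set Ai : Matrix (Fin n) (Fin n) ℝ := Lp + c • J with hAidef
  have hAAi : A * Ai = 1 := by
    rw [hAdef, hAidef]
    rw [add_mul, mul_add, mul_add, hPQ, Matrix.smul_mul, Matrix.mul_smul, Matrix.mul_smul,
      Matrix.smul_mul, hLJ, hJLp, hJJ]
    rw [smul_smul, smul_smul]
    rw [show c * c * (n : ℝ) = c by rw [hc]; field_simp]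
    simp
  have hAiA : Ai * A = 1 := by
    rw [hAdef, hAidef]
    rw [add_mul, mul_add, mul_add, hQP, Matrix.smul_mul, Matrix.mul_smul, Matrix.mul_smul,
      Matrix.smul_mul, hLpJ, hJL, hJJ]
    rw [smul_smul, smul_smul]
    rw [show c * c * (n : ℝ) = c by rw [hc]; field_simp]
    simp
  have hAinv : A⁻¹ = Ai := Matrix.inv_eq_right_inv hAAi
  have hAunit : IsUnit A := by
    rw [Matrix.isUnit_iff_isUnit_det]
    exact Matrix.isUnit_det_of_right_inverse hAAi
  -- the U matrix
  set e₁ : Fin n → ℝ := Pi.single s₁ 1 with he₁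
  set e₂ : Fin n → ℝ := Pi.single s₂ 1 with he₂
  set U : Matrix (Fin n) (Fin 3) ℝ := Matrix.of (fun i t => ![e₁ i, e₂ i, 1] t) with hUdef
  -- abbreviations for entries
  set a : ℝ := Lp s₁ s₁ with ha
  set b : ℝ := Lp s₂ s₂ with hb
  set e : ℝ := Lp s₁ s₂ with he
  have hLpsym : Lp s₂ s₁ = e := by rw [he, ← hLpt, transpose_apply, hLpt]
  -- r facts
  set v : Fin n → ℝ := e₁ - e₂ with hv
  have hvo : ∀ B : Matrix (Fin n) (Fin n) ℝ, B s₂ s₁ = B s₁ s₂ →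
      v ⬝ᵥ (B *ᵥ v) = B s₁ s₁ + B s₂ s₂ - 2 * B s₁ s₂ := by
    intro B hBsym
    rw [hv, he₁, he₂, Matrix.mulVec_sub, Matrix.mulVec_single, Matrix.mulVec_single]
    simp [sub_dotProduct, dotProduct_sub, single_dotProduct, hBsym]
    ring
  have hrv : r = v ⬝ᵥ (Lp *ᵥ v) := by
    rw [hvo Lp hLpsym, hr, ← ha, ← hb, ← he]
  have hw : v ⬝ᵥ (Lp *ᵥ v) = (Lp *ᵥ v) ⬝ᵥ (L *ᵥ (Lp *ᵥ v)) := by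
    calc v ⬝ᵥ (Lp *ᵥ v) = v ⬝ᵥ ((Lp * L * Lp) *ᵥ v) := by rw [hp2]
    _ = v ⬝ᵥ (Lp *ᵥ (L *ᵥ (Lp *ᵥ v))) := by
          rw [← Matrix.mulVec_mulVec, ← Matrix.mulVec_mulVec]
    _ = (v ᵥ* Lp) ⬝ᵥ (L *ᵥ (Lp *ᵥ v)) := by rw [Matrix.dotProduct_mulVec]
    _ = (Lp *ᵥ v) ⬝ᵥ (L *ᵥ (Lp *ᵥ v)) := by rw [← hLpt, Matrix.vecMul_transpose, hLpt]
  have hrnn : 0 ≤ r := by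
    rw [hrv, hw]
    have := hL.dotProduct_mulVec_nonneg (Lp *ᵥ v)
    simpa using this
  have hr0 : r ≠ 0 := by
    intro h0
    have hz : L *ᵥ (Lp *ᵥ v) = 0 := by
      have := (hL.dotProduct_mulVec_zero_iff (Lp *ᵥ v)).mp ?_
      · exact this
      · have : (Lp *ᵥ v) ⬝ᵥ (L *ᵥ (Lp *ᵥ v)) = 0 := by rw [← hw, ← hrv, h0]
        simpa using this
    have hQv : (1 - c • J) *ᵥ v = 0 := by
      rw [← hPQ, ← Matrix.mulVec_mulVec, hz]
    have hJv : J *ᵥ v = 0 := by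
      ext i
      have : o ⬝ᵥ v = 0 := by
        simp [ho, hv, he₁, he₂, dotProduct_sub, dotProduct_single]
      simpa [hJdef, Matrix.mulVec, dotProduct, ho, hv] using this
    rw [Matrix.sub_mulVec, Matrix.one_mulVec, Matrix.smul_mulVec, hJv, smul_zero,
      sub_zero] at hQv
    have := congrFun hQv s₁
    rw [hv, he₁, he₂] at this
    simp [Pi.single_apply, hs, Ne.symm hs] at this
  -- row/column sums
  have hoo : o ⬝ᵥ o = (n : ℝ) := by simp [ho, dotProduct]
  have hoJ : o ᵥ* J = (n : ℝ) • o := by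
    ext j; simp [hJdef, Matrix.vecMul, dotProduct, ho]
  -- generic conjugation computation
  have hconj : ∀ B : Matrix (Fin n) (Fin n) ℝ, B *ᵥ o = 0 → o ᵥ* B = 0 →
      Uᵀ * (B + c • J) * U =
        !![B s₁ s₁ + c, B s₁ s₂ + c, 1; B s₂ s₁ + c, B s₂ s₂ + c, 1; 1, 1, (n : ℝ)] := by
    intro B hBo hoB
    have hBrow : ∀ i, ∑ j, B i j = 0 := by
      intro i
      have := congrFun hBo i
      simpa [Matrix.mulVec, dotProduct, ho] using this
    have hBcol : ∀ j, ∑ i, B i j = 0 := by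
      intro j
      have := congrFun hoB j
      simpa [Matrix.vecMul, dotProduct, ho] using this
    have hBc : ∀ i j, (B + c • J) i j = B i j + c := by intro i j; simp [hJdef]
    ext t t'
    fin_cases t <;> fin_cases t' <;>
      simp [Matrix.mul_apply, hUdef, he₁, he₂, Pi.single_apply, ite_mul, mul_ite,
        hBc, Finset.sum_add_distrib, Finset.sum_ite_eq, Finset.sum_ite_eq',
        Finset.sum_const, Finset.card_univ, hBrow, hBcol, hc, inv_mul_cancel₀ hn0,
        mul_comm ((n:ℝ)⁻¹) ((n:ℝ)), hJdef] <;>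
      field_simp
  -- Ai * Ai
  have hAi2 : Ai * Ai = Lp * Lp + c • J := by
    rw [hAidef]
    rw [add_mul, mul_add, mul_add, Matrix.smul_mul, Matrix.mul_smul, Matrix.mul_smul,
      Matrix.smul_mul, hLpJ, hJLp, hJJ, smul_smul, smul_smul,
      show c * c * (n : ℝ) = c by rw [hc]; field_simp]
    simp
  have hLpLpo : (Lp * Lp) *ᵥ o = 0 := by
    rw [← Matrix.mulVec_mulVec, hLpo, Matrix.mulVec_zero]
  have hoLpLp : o ᵥ* (Lp * Lp) = 0 := by
    rw [← Matrix.vecMul_vecMul, hoLp, Matrix.zero_vecMul]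
  have hB2t : (Lp * Lp)ᵀ = Lp * Lp := by rw [transpose_mul, hLpt]
  set g11 : ℝ := (Lp * Lp) s₁ s₁ with hg11
  set g22 : ℝ := (Lp * Lp) s₂ s₂ with hg22
  set g12 : ℝ := (Lp * Lp) s₁ s₂ with hg12
  have hB2sym : (Lp * Lp) s₂ s₁ = g12 := by
    rw [hg12, ← hB2t, transpose_apply, hB2t]
  have hγE : γ = g11 + g22 - 2 * g12 := by
    rw [hγ, hvo (Lp * Lp) (by rw [hB2sym, hg12]), ← hg11, ← hg22, ← hg12]
  -- the 3x3 matrices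
  set Sinf : Matrix (Fin 3) (Fin 3) ℝ := !![a+c, e+c, 1; e+c, b+c, 1; 1, 1, 0] with hSinf
  set Nm : Matrix (Fin 3) (Fin 3) ℝ := !![1,0,0;0,1,0;0,0,0] with hNm
  set Tm : Matrix (Fin 3) (Fin 3) ℝ :=
    !![g11+c, g12+c, 1; g12+c, g22+c, 1; 1, 1, (n:ℝ)] with hTmdef
  have hTm : Uᵀ * (Ai * Ai) * U = Tm := by
    rw [hAi2, hconj (Lp * Lp) hLpLpo hoLpLp, hTmdef, hB2sym, ← hg11, ← hg22, ← hg12]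
  -- the diagonal matrix and its inverse
  have hDinv : ∀ k : ℝ, k ≠ 0 →
      (Matrix.diagonal ![k, k, -c])⁻¹ = Matrix.diagonal ![k⁻¹, k⁻¹, -(n:ℝ)] := by
    intro k hk
    apply Matrix.inv_eq_right_inv
    rw [Matrix.diagonal_mul_diagonal]
    have hfun : (fun i => ![k, k, -c] i * ![k⁻¹, k⁻¹, -(n:ℝ)] i) = fun _ => (1:ℝ) := by
      funext t
      fin_cases t
      · show k * k⁻¹ = 1; exact mul_inv_cancel₀ hk
      · show k * k⁻¹ = 1; exact mul_inv_cancel₀ hk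
      · show -c * -(n:ℝ) = 1
        rw [hc]; field_simp
    rw [hfun]
    exact Matrix.diagonal_one
  have hDunit : ∀ k : ℝ, k ≠ 0 → IsUnit (Matrix.diagonal ![k, k, -c]) := by
    intro k hk
    rw [Matrix.isUnit_iff_isUnit_det, Matrix.det_diagonal, Fin.prod_univ_three]
    simp only [Matrix.cons_val_zero, Matrix.cons_val_one, Matrix.head_cons, isUnit_iff_ne_zero]
    have hcne : c ≠ 0 := by rw [hc]; exact inv_ne_zero hn0
    simp [hk, hcne]
  -- decomposition of the perturbed matrix
  have hM : ∀ k : ℝ, L + k • Matrix.single s₁ s₁ (1:ℝ)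
      + k • Matrix.single s₂ s₂ (1:ℝ) = A + U * Matrix.diagonal ![k, k, -c] * Uᵀ := by
    intro k
    have hUDU : U * Matrix.diagonal ![k, k, -c] * Uᵀ
        = k • Matrix.single s₁ s₁ (1:ℝ) + k • Matrix.single s₂ s₂ (1:ℝ)
          - c • J := by
      ext i j
      rw [Matrix.mul_assoc, Matrix.mul_apply, Matrix.single_eq_of_single_single,
        Matrix.single_eq_of_single_single]
      simp only [Matrix.diagonal_mul, Matrix.transpose_apply,
        Fin.sum_univ_three, hUdef, Matrix.of_apply, Matrix.cons_val_zero, Matrix.cons_val_one,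
        Matrix.head_cons, Matrix.cons_val_two, Matrix.tail_cons, he₁, he₂,
        Matrix.sub_apply, Matrix.add_apply, Matrix.smul_apply,
        Pi.single_apply, ite_apply, Pi.zero_apply, hJdef, smul_eq_mul, mul_one, one_mul]
      split_ifs <;> ring
    rw [hUDU, hAdef]
    abel
  have hSkdef : ∀ k : ℝ, k ≠ 0 →
      (Matrix.diagonal ![k, k, -c])⁻¹ + Uᵀ * A⁻¹ * U = Sinf + k⁻¹ • Nm := by
    intro k hk
    rw [hDinv k hk, hAinv, hAidef, hconj Lp hLpo hoLp]
    ext t t'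
    fin_cases t <;> fin_cases t' <;>
      simp [Matrix.diagonal_apply, hSinf, hNm, hLpsym, ← ha, ← hb, ← he,
        Matrix.vecHead, Matrix.vecTail] <;> ring
  have hdetSk : ∀ k : ℝ, (Sinf + k⁻¹ • Nm).det = -(r + 2*k⁻¹) := by
    intro k
    have hmat : Sinf + k⁻¹ • Nm = !![a+c+k⁻¹, e+c, 1; e+c, b+c+k⁻¹, 1; 1, 1, 0] := by
      ext t t'
      fin_cases t <;> fin_cases t' <;>
        simp [hSinf, hNm, Matrix.vecHead, Matrix.vecTail] <;> ring
    rw [hmat, Matrix.det_fin_three]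
    simp
    rw [hr]
    ring
  have hSkunit : ∀ k : ℝ, 1 ≤ k → IsUnit (Sinf + k⁻¹ • Nm) := by
    intro k hk
    rw [Matrix.isUnit_iff_isUnit_det, hdetSk, isUnit_iff_ne_zero]
    have hkpos : 0 < k⁻¹ := inv_pos.mpr (lt_of_lt_of_le one_pos hk)
    intro hcontra
    nlinarith
  -- eventual equality of traces
  have hEv : ∀ k : ℝ, 1 ≤ k →
      ((L + k • Matrix.single s₁ s₁ (1:ℝ)
        + k • Matrix.single s₂ s₂ (1:ℝ))⁻¹).trace
        = Ai.trace - (Tm * (Sinf + k⁻¹ • Nm)⁻¹).trace := by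
    intro k hk
    have hk0 : k ≠ 0 := ne_of_gt (lt_of_lt_of_le one_pos hk)
    have hSku : IsUnit ((Matrix.diagonal ![k, k, -c])⁻¹ + Uᵀ * A⁻¹ * U) := by
      rw [hSkdef k hk0]; exact hSkunit k hk
    rw [hM k, Matrix.add_mul_mul_inv_eq_sub _ _ _ _ hAunit (hDunit k hk0) hSku]
    rw [hSkdef k hk0, hAinv, Matrix.trace_sub]
    congr 1
    calc (Ai * U * (Sinf + k⁻¹ • Nm)⁻¹ * Uᵀ * Ai).trace
        = ((Ai * U * (Sinf + k⁻¹ • Nm)⁻¹) * (Uᵀ * Ai)).trace := by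
          rw [Matrix.mul_assoc]
      _ = ((Uᵀ * Ai) * (Ai * U * (Sinf + k⁻¹ • Nm)⁻¹)).trace := Matrix.trace_mul_comm _ _
      _ = ((Uᵀ * (Ai * Ai) * U) * (Sinf + k⁻¹ • Nm)⁻¹).trace := by
          rw [show (Uᵀ * Ai) * (Ai * U * (Sinf + k⁻¹ • Nm)⁻¹)
            = (Uᵀ * (Ai * Ai) * U) * (Sinf + k⁻¹ • Nm)⁻¹ by simp only [Matrix.mul_assoc]]
      _ = (Tm * (Sinf + k⁻¹ • Nm)⁻¹).trace := by rw [hTm]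
  -- the limit
  have hSinfdet : Sinf.det = -r := by
    rw [hSinf, Matrix.det_fin_three]
    simp [Matrix.vecHead, Matrix.vecTail]
    rw [hr]; ring
  have hcontinv : ContinuousAt Inv.inv Sinf := by
    apply continuousAt_matrix_inv
    rw [hSinfdet]
    exact NormedRing.inverse_continuousAt (Units.mk0 (-r) (neg_ne_zero.mpr hr0))
  have htendS : Tendsto (fun k : ℝ => Sinf + k⁻¹ • Nm) atTop (nhds Sinf) := by
    have h1 : Tendsto (fun k : ℝ => k⁻¹) atTop (nhds (0:ℝ)) := tendsto_inv_atTop_zero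
    have h2 := h1.smul_const Nm
    rw [zero_smul] at h2
    have h3 := (tendsto_const_nhds (x := Sinf) (f := (atTop : Filter ℝ))).add h2
    simpa using h3
  have htendinv : Tendsto (fun k : ℝ => (Sinf + k⁻¹ • Nm)⁻¹) atTop (nhds Sinf⁻¹) :=
    hcontinv.tendsto.comp htendS
  have hcont2 : Continuous fun X : Matrix (Fin 3) (Fin 3) ℝ => (Tm * X).trace :=
    (continuous_const.matrix_mul continuous_id).matrix_trace
  have htr : Tendsto (fun k : ℝ => (Tm * (Sinf + k⁻¹ • Nm)⁻¹).trace) atTop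
      (nhds ((Tm * Sinf⁻¹).trace)) := (hcont2.tendsto _).comp htendinv
  have hfinal : Tendsto (fun k : ℝ => Ai.trace - (Tm * (Sinf + k⁻¹ • Nm)⁻¹).trace) atTop
      (nhds (Ai.trace - (Tm * Sinf⁻¹).trace)) := tendsto_const_nhds.sub htr
  -- value identity
  have hJtr : J.trace = (n:ℝ) := by simp [hJdef, Matrix.trace, Matrix.diag]
  have hAitr : Ai.trace = Lp.trace + 1 := by
    rw [hAidef, Matrix.trace_add, Matrix.trace_smul, hJtr, smul_eq_mul, hc,
      inv_mul_cancel₀ hn0]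
  have hrne : (-r) ≠ 0 := neg_ne_zero.mpr hr0
  set W0 : Matrix (Fin 3) (Fin 3) ℝ :=
    !![-1, 1, e-b; 1, -1, e-a; e-b, e-a, (a+c)*(b+c)-(e+c)^2] with hW0
  have hSW : Sinf * ((-r)⁻¹ • W0) = 1 := by
    rw [Matrix.mul_smul]
    have h1 : Sinf * W0 = (-r) • (1 : Matrix (Fin 3) (Fin 3) ℝ) := by
      ext t t'
      fin_cases t <;> fin_cases t' <;>
        simp [hSinf, hW0, Matrix.mul_apply, Fin.sum_univ_three, Matrix.one_apply,
           Matrix.vecHead, Matrix.vecTail, hr] <;> ring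
    rw [h1, smul_smul, inv_mul_cancel₀ hrne, one_smul]
  have hSinfinv : Sinf⁻¹ = (-r)⁻¹ • W0 := Matrix.inv_eq_right_inv hSW
  have hval : Ai.trace - (Tm * Sinf⁻¹).trace
      = Lp.trace + ((n:ℝ) * (a * b - e^2) - γ) / r := by
    rw [hAitr, hSinfinv, Matrix.mul_smul, Matrix.trace_smul, smul_eq_mul]
    have htrexp : (Tm * W0).trace =
        -(g11 + g22 - 2*g12) - 2*r + (n:ℝ)*((a+c)*(b+c)-(e+c)^2) := by
      rw [Matrix.trace_fin_three]
      simp [hTmdef, hW0, Matrix.mul_apply, Fin.sum_univ_three, Matrix.vecHead, Matrix.vecTail]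
      rw [hr]; ring
    have hkey : (n:ℝ)*((a+c)*(b+c)-(e+c)^2) = (n:ℝ)*(a*b-e^2) + r := by
      rw [hr, hc]
      field_simp
      ring
    rw [htrexp, hγE, hkey]
    field_simp [hr0]
    ring
  rw [← hval]
  apply hfinal.congr'
  filter_upwards [eventually_ge_atTop (1:ℝ)] with k hk
  exact (hEv k hk).symm
end

section
/- Let n ≥ 3 be an integer. For vertices of the n-cycle identified with ℤ/nℤ, let d(i,j) = min((i−j) mod n, (j−i) mod n) denote the geodesic distance, and define r(i,j) = d(i,j)(n − d(i,j))/n ∈ ℚ (the resistance distance on the cycle). Then for any two vertices a, b with d = d(a,b), Σ_{i ∈ ℤ/nℤ} ( r(i,a) − r(i,b) )² = d(n − d)( d(n − d) + 2 ) / (3n). -/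
open Finset

private lemma aux_sum_id (m : ℕ) : ∑ s ∈ Finset.range m, (s : ℚ) = m * (m - 1) / 2 := by
  induction m with
  | zero => simp
  | succ m ih => rw [Finset.sum_range_succ, ih]; push_cast; ring

private lemma aux_sum_sq (m : ℕ) :
    ∑ s ∈ Finset.range m, (s : ℚ) ^ 2 = m * (m - 1) * (2 * m - 1) / 6 := by
  induction m with
  | zero => simp
  | succ m ih => rw [Finset.sum_range_succ, ih]; push_cast; ring

private lemma aux_A (m : ℕ) :
    ∑ s ∈ Finset.range m, ((m : ℚ) - 2 * s) ^ 2 = m * ((m : ℚ) ^ 2 + 2) / 3 := by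
  have h : ∀ s ∈ Finset.range m, ((m : ℚ) - 2 * s) ^ 2
      = (m : ℚ) ^ 2 - 4 * m * s + 4 * s ^ 2 := by
    intro s _; ring
  rw [Finset.sum_congr rfl h]
  rw [Finset.sum_add_distrib, Finset.sum_sub_distrib, ← Finset.mul_sum, ← Finset.mul_sum,
    Finset.sum_const, Finset.card_range, aux_sum_id, aux_sum_sq, nsmul_eq_mul]
  ring

private lemma zmod_sum {n : ℕ} [NeZero n] (f : ZMod n → ℚ) :
    ∑ j : ZMod n, f j = ∑ t ∈ Finset.range n, f (t : ZMod n) := by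
  refine (Finset.sum_nbij' (i := fun t : ℕ => (t : ZMod n)) (j := fun j : ZMod n => j.val)
    ?_ ?_ ?_ ?_ ?_).symm
  · intro t _; exact Finset.mem_univ _
  · intro j _; exact Finset.mem_range.mpr (ZMod.val_lt j)
  · intro t ht; exact ZMod.val_natCast_of_lt (Finset.mem_range.mp ht)
  · intro j _; exact ZMod.natCast_rightInverse j
  · intro t _; rfl

private lemma minprod {n : ℕ} [NeZero n] (u : ZMod n) :
    ((min u.val (-u).val : ℕ) : ℚ) * ((n : ℚ) - (min u.val (-u).val : ℕ))
      = (u.val : ℚ) * ((n : ℚ) - u.val) := by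
  rcases eq_or_ne u 0 with h0 | h0
  · simp [h0]
  · rw [ZMod.neg_val, if_neg h0]
    have hxn : u.val < n := ZMod.val_lt u
    rcases le_total u.val (n - u.val) with hle | hle
    · rw [min_eq_left hle]
    · rw [min_eq_right hle]
      have h1 : ((n - u.val : ℕ) : ℚ) = (n : ℚ) - u.val := by
        push_cast [Nat.cast_sub hxn.le]; ring
      rw [h1]; ring

/-- On the `n`-cycle (`n ≥ 3`) with vertices `ZMod n`, geodesic distance
`d(i,j) = min((i−j) mod n, (j−i) mod n)` and resistance distance `r(i,j) = d(i,j)(n−d(i,j))/n`,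
for any vertices `a, b` with `d = d(a,b)`:
`Σ_{i} (r(i,a) − r(i,b))² = d(n−d)(d(n−d)+2)/(3n)`. -/
theorem stmt_11 {n : ℕ} (hn : 3 ≤ n) [NeZero n]
    (d : ZMod n → ZMod n → ℕ)
    (hd : ∀ i j : ZMod n, d i j = min (i - j).val (j - i).val)
    (r : ZMod n → ZMod n → ℚ)
    (hr : ∀ i j : ZMod n, r i j = (d i j : ℚ) * ((n : ℚ) - (d i j : ℚ)) / n)
    (a b : ZMod n) :
    ∑ i : ZMod n, (r i a - r i b) ^ 2 =
      (d a b : ℚ) * ((n : ℚ) - (d a b : ℚ)) *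
        ((d a b : ℚ) * ((n : ℚ) - (d a b : ℚ)) + 2) / (3 * n) := by
  have hN : (n : ℚ) ≠ 0 := Nat.cast_ne_zero.mpr (NeZero.ne n)
  set c : ZMod n := a - b with hc
  set k : ℕ := c.val with hk
  have hkn : k < n := ZMod.val_lt c
  have hck : (k : ZMod n) = c := ZMod.natCast_rightInverse c
  -- value of r in terms of val
  have key : ∀ i j : ZMod n,
      r i j = ((i - j).val : ℚ) * ((n : ℚ) - ((i - j).val : ℚ)) / n := by
    intro i j
    have hji : j - i = -(i - j) := by ring
    rw [hr, hd, hji, minprod (i - j)]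
  -- value of the RHS coefficient
  have hdab : (d a b : ℚ) * ((n : ℚ) - (d a b : ℚ)) = (k : ℚ) * ((n : ℚ) - k) := by
    have hba : b - a = -(a - b) := by ring
    rw [hd, hba, ← hc, ← hk, minprod c]
  -- the summand as a function
  set g : ZMod n → ℚ := fun i =>
    (((i - a).val : ℚ) * ((n : ℚ) - ((i - a).val : ℚ)) / n
      - ((i - b).val : ℚ) * ((n : ℚ) - ((i - b).val : ℚ)) / n) ^ 2 with hg
  have hL : ∑ i : ZMod n, (r i a - r i b) ^ 2 = ∑ i : ZMod n, g i := by
    refine Finset.sum_congr rfl fun i _ => ?_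
    rw [key i a, key i b, hg]
  rw [hL]
  -- reindex by translation by b
  have htrans : ∑ i : ZMod n, g i = ∑ j : ZMod n, g (j + b) :=
    (Equiv.sum_comp (Equiv.addRight b) g).symm
  rw [htrans]
  have hshift : ∀ j : ZMod n, g (j + b) =
      (((j - c).val : ℚ) * ((n : ℚ) - ((j - c).val : ℚ)) / n
        - ((j).val : ℚ) * ((n : ℚ) - ((j).val : ℚ)) / n) ^ 2 := by
    intro j
    have h1 : j + b - a = j - c := by rw [hc]; ring
    have h2 : j + b - b = j := by ring
    simp only [hg]
    rw [h1, h2]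
  rw [Finset.sum_congr rfl fun j _ => hshift j]
  -- to a sum over range n
  rw [zmod_sum]
  -- compute each term
  have hterm : ∀ t ∈ Finset.range n,
      ((((t : ZMod n) - c).val : ℚ) * ((n : ℚ) - (((t : ZMod n) - c).val : ℚ)) / n
        - (((t : ZMod n)).val : ℚ) * ((n : ℚ) - (((t : ZMod n)).val : ℚ)) / n) ^ 2
      = if t < k then ((n : ℚ) - k) ^ 2 * ((k : ℚ) - 2 * t) ^ 2 / (n : ℚ) ^ 2
        else (k : ℚ) ^ 2 * ((n : ℚ) + k - 2 * t) ^ 2 / (n : ℚ) ^ 2 := by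
    intro t ht
    have htn : t < n := Finset.mem_range.mp ht
    have hv0 : ((t : ZMod n)).val = t := ZMod.val_natCast_of_lt htn
    rcases lt_or_ge t k with hlt | hge
    · have hlt' : t + (n - k) < n := by omega
      have he : (t : ZMod n) - c = ((t + (n - k) : ℕ) : ZMod n) := by
        rw [← hck]
        push_cast [Nat.cast_sub hkn.le]
        rw [ZMod.natCast_self]
        ring
      have hv1 : ((t : ZMod n) - c).val = t + (n - k) := by
        rw [he, ZMod.val_natCast_of_lt hlt']
      rw [hv0, hv1, if_pos hlt]
      have hcast : ((t + (n - k) : ℕ) : ℚ) = (t : ℚ) + ((n : ℚ) - k) := by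
        push_cast [Nat.cast_sub hkn.le]; ring
      rw [hcast]
      field_simp
      ring
    · have he : (t : ZMod n) - c = ((t - k : ℕ) : ZMod n) := by
        rw [← hck, Nat.cast_sub hge]
      have hv1 : ((t : ZMod n) - c).val = t - k := by
        rw [he, ZMod.val_natCast_of_lt (by omega)]
      rw [hv0, hv1, if_neg (by omega)]
      have hcast : ((t - k : ℕ) : ℚ) = (t : ℚ) - k := by
        push_cast [Nat.cast_sub hge]; ring
      rw [hcast]
      field_simp
      ring
  rw [Finset.sum_congr rfl hterm]
  -- split the sum
  rw [Finset.range_eq_Ico, ← Finset.sum_Ico_consecutive _ (Nat.zero_le k) hkn.le,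
    ← Finset.range_eq_Ico, Finset.sum_Ico_eq_sum_range]
  have hs1 : ∑ t ∈ Finset.range k,
      (if t < k then ((n : ℚ) - k) ^ 2 * ((k : ℚ) - 2 * t) ^ 2 / (n : ℚ) ^ 2
        else (k : ℚ) ^ 2 * ((n : ℚ) + k - 2 * t) ^ 2 / (n : ℚ) ^ 2)
      = ((n : ℚ) - k) ^ 2 / (n : ℚ) ^ 2 * ((k : ℚ) * ((k : ℚ) ^ 2 + 2) / 3) := by
    rw [← aux_A k, Finset.mul_sum]
    refine Finset.sum_congr rfl fun t ht => ?_
    rw [if_pos (Finset.mem_range.mp ht)]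
    ring
  have hs2 : ∑ s ∈ Finset.range (n - k),
      (if k + s < k then ((n : ℚ) - k) ^ 2 * ((k : ℚ) - 2 * ((k + s : ℕ) : ℚ)) ^ 2 / (n : ℚ) ^ 2
        else (k : ℚ) ^ 2 * ((n : ℚ) + k - 2 * ((k + s : ℕ) : ℚ)) ^ 2 / (n : ℚ) ^ 2)
      = (k : ℚ) ^ 2 / (n : ℚ) ^ 2 * (((n - k : ℕ) : ℚ) * (((n - k : ℕ) : ℚ) ^ 2 + 2) / 3) := by
    rw [← aux_A (n - k), Finset.mul_sum]
    refine Finset.sum_congr rfl fun s _ => ?_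
    rw [if_neg (by omega)]
    have hcast : ((n - k : ℕ) : ℚ) = (n : ℚ) - k := by
      push_cast [Nat.cast_sub hkn.le]; ring
    rw [hcast]
    push_cast
    ring
  rw [hs1, hs2, hdab]
  have hcast : ((n - k : ℕ) : ℚ) = (n : ℚ) - k := by
    push_cast [Nat.cast_sub hkn.le]; ring
  rw [hcast]
  field_simp
  ring
end

section
/- Let w ≥ 1 and let T_w be the w×w real tridiagonal matrix with 2 on the main diagonal, −1 on the first super- and sub-diagonals, and 0 elsewhere. Then T_w is invertible and tr(T_w⁻¹) = w(w + 2)/6. -/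
open Matrix

private lemma stmt13_sum1 (n : ℕ) :
    ∑ i ∈ Finset.range n, ((i : ℝ) + 1) = n * (n + 1) / 2 := by
  induction n with
  | zero => simp
  | succ n ih => rw [Finset.sum_range_succ, ih]; push_cast; ring

private lemma stmt13_sum2 (n : ℕ) :
    ∑ i ∈ Finset.range n, (i : ℝ) * ((i : ℝ) + 1) = ((n : ℝ) - 1) * n * (n + 1) / 3 := by
  induction n with
  | zero => simp
  | succ n ih => rw [Finset.sum_range_succ, ih]; push_cast; ring

/-- Second difference of the discrete Green's function. -/
private lemma stmt13_key (w j i : ℕ) :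
    2 * (min ((i : ℝ) + 1) ((j : ℝ) + 1) * ((w : ℝ) + 1 - max ((i : ℝ) + 1) ((j : ℝ) + 1)))
      - min (i : ℝ) ((j : ℝ) + 1) * ((w : ℝ) + 1 - max (i : ℝ) ((j : ℝ) + 1))
      - min ((i : ℝ) + 2) ((j : ℝ) + 1) * ((w : ℝ) + 1 - max ((i : ℝ) + 2) ((j : ℝ) + 1))
      = if i = j then (w : ℝ) + 1 else 0 := by
  rcases lt_trichotomy i j with h | h | h
  · have hc : ((i : ℝ)) + 1 ≤ (j : ℝ) := by exact_mod_cast h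
    rw [min_eq_left (by linarith), min_eq_left (by linarith), min_eq_left (by linarith),
      max_eq_right (by linarith), max_eq_right (by linarith), max_eq_right (by linarith),
      if_neg (by omega)]
    ring
  · subst h
    rw [min_eq_left (le_refl _), min_eq_left (by linarith), min_eq_right (by linarith),
      max_eq_right (le_refl _), max_eq_right (by linarith), max_eq_left (by linarith),
      if_pos rfl]
    ring
  · have hc : ((j : ℝ)) + 1 ≤ (i : ℝ) := by exact_mod_cast h
    rw [min_eq_right (by linarith), min_eq_right (by linarith), min_eq_right (by linarith),
      max_eq_left (by linarith), max_eq_left (by linarith), max_eq_left (by linarith),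
      if_neg (by omega)]
    ring

/-- Let `T` be the `w × w` tridiagonal matrix with `2` on the diagonal and `−1`
on the first super- and sub-diagonals. Then `T` is invertible and
`tr(T⁻¹) = w(w+2)/6`. -/
theorem stmt_13 {w : ℕ} (hw : 1 ≤ w)
    (T : Matrix (Fin w) (Fin w) ℝ)
    (hT : ∀ i j : Fin w, T i j =
      if i = j then 2 else if i.val + 1 = j.val ∨ j.val + 1 = i.val then -1 else 0) :
    IsUnit T ∧ T⁻¹.trace = (w : ℝ) * ((w : ℝ) + 2) / 6 := by
  have hw1 : ((w : ℝ) + 1) ≠ 0 := by positivity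
  -- the explicit inverse
  set u : ℕ → ℕ → ℝ := fun j a =>
    min (a : ℝ) ((j : ℝ) + 1) * ((w : ℝ) + 1 - max (a : ℝ) ((j : ℝ) + 1)) with hu
  have hu0 : ∀ j : Fin w, u j 0 = 0 := by
    intro j
    simp only [hu, Nat.cast_zero]
    rw [min_eq_left (by positivity)]
    ring
  have huw : ∀ j : Fin w, u j (w + 1) = 0 := by
    intro j
    have hj : ((j : ℝ)) + 1 ≤ (w : ℝ) + 1 := by
      have := j.isLt
      have : ((j : ℝ)) ≤ (w : ℝ) := by exact_mod_cast this.le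
      linarith
    simp only [hu]
    rw [max_eq_left (by push_cast; linarith)]
    push_cast
    ring
  set M : Matrix (Fin w) (Fin w) ℝ := fun i j => u j (i.val + 1) / ((w : ℝ) + 1) with hM
  -- the crucial row-sum computation
  have hsum : ∀ i j : Fin w,
      (∑ k : Fin w, T i k * u j (k.val + 1)) =
        2 * u j (i.val + 1) - u j i.val - u j (i.val + 2) := by
    intro i j
    have step1 : (∑ k : Fin w, T i k * u j (k.val + 1)) =
        ∑ k ∈ Finset.range w,
          ((if k = i.val then 2 * u j (k + 1) else 0)
            + (if k = i.val + 1 then -u j (k + 1) else 0)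
            + (if k + 1 = i.val then -u j (k + 1) else 0)) := by
      rw [← Fin.sum_univ_eq_sum_range]
      refine Finset.sum_congr rfl fun k _ => ?_
      rw [hT]
      simp only [Fin.ext_iff]
      split_ifs <;> first | ring1 | omega | (exfalso; omega)
    rw [step1, Finset.sum_add_distrib, Finset.sum_add_distrib,
      Finset.sum_ite_eq' (Finset.range w) i.val (fun k => 2 * u j (k + 1)),
      Finset.sum_ite_eq' (Finset.range w) (i.val + 1) (fun k => -u j (k + 1))]
    have h1 : (if i.val ∈ Finset.range w then 2 * u j (i.val + 1) else 0)
        = 2 * u j (i.val + 1) := by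
      rw [if_pos (Finset.mem_range.mpr i.isLt)]
    have h2 : (if i.val + 1 ∈ Finset.range w then -u j (i.val + 1 + 1) else 0)
        = -u j (i.val + 2) := by
      by_cases hb : i.val + 1 < w
      · rw [if_pos (Finset.mem_range.mpr hb)]
      · have : i.val + 1 = w := by omega
        rw [if_neg (by simp [Finset.mem_range]; omega)]
        rw [show i.val + 2 = w + 1 by omega, huw j]
        ring
    have h3 : (∑ k ∈ Finset.range w, if k + 1 = i.val then -u j (k + 1) else 0)
        = -u j i.val := by
      rcases Nat.eq_zero_or_pos i.val with h0 | hpos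
      · rw [h0]
        rw [Finset.sum_eq_zero (by intro k _; rw [if_neg (by omega)])]
        rw [hu0 j]
        ring
      · obtain ⟨m, hm⟩ := Nat.exists_eq_add_of_le hpos
        have hmi : i.val = m + 1 := by omega
        have hmlt : m < w := by have := i.isLt; omega
        calc (∑ k ∈ Finset.range w, if k + 1 = i.val then -u j (k + 1) else 0)
            = ∑ k ∈ Finset.range w, if k = m then -u j (k + 1) else 0 := by
              refine Finset.sum_congr rfl fun k _ => ?_
              congr 1
              simp only [hmi]
              simp [Nat.add_right_cancel_iff]
          _ = -u j (m + 1) := by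
              rw [Finset.sum_ite_eq' (Finset.range w) m (fun k => -u j (k + 1)),
                if_pos (Finset.mem_range.mpr hmlt)]
          _ = -u j i.val := by rw [hmi]
    rw [h1, h2, h3]
    ring
  -- T * M = 1
  have hTM : T * M = 1 := by
    ext i j
    rw [Matrix.mul_apply]
    have : (∑ k : Fin w, T i k * M k j)
        = (∑ k : Fin w, T i k * u j (k.val + 1)) / ((w : ℝ) + 1) := by
      rw [Finset.sum_div]
      refine Finset.sum_congr rfl fun k _ => ?_
      rw [hM]
      ring
    rw [this, hsum i j]
    have hkey := stmt13_key w j.val i.val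
    simp only [hu]
    push_cast
    rw [hkey]
    by_cases hij : i = j
    · subst hij
      rw [if_pos rfl, Matrix.one_apply_eq]
      field_simp
    · rw [if_neg (by simpa [Fin.ext_iff] using hij), Matrix.one_apply_ne hij]
      simp
  have hMT : M * T = 1 := mul_eq_one_comm.mp hTM
  have hUnit : IsUnit T := ⟨⟨T, M, hTM, hMT⟩, rfl⟩
  refine ⟨hUnit, ?_⟩
  have hinv : T⁻¹ = M := Matrix.inv_eq_right_inv hTM
  rw [hinv]
  -- compute the trace
  have hdiag : ∀ i : Fin w, M i i = ((i : ℝ) + 1) * ((w : ℝ) - i) / ((w : ℝ) + 1) := by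
    intro i
    rw [hM]
    simp only [hu]
    push_cast
    rw [min_self, max_self]
    ring
  rw [Matrix.trace]
  simp only [Matrix.diag]
  calc (∑ i : Fin w, M i i)
      = ∑ i : Fin w, ((i : ℝ) + 1) * ((w : ℝ) - i) / ((w : ℝ) + 1) := by
        exact Finset.sum_congr rfl fun i _ => hdiag i
    _ = (∑ i ∈ Finset.range w, ((i : ℝ) + 1) * ((w : ℝ) - i)) / ((w : ℝ) + 1) := by
        rw [← Fin.sum_univ_eq_sum_range (fun i => ((i : ℝ) + 1) * ((w : ℝ) - i)) w,
          Finset.sum_div]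
    _ = ((w : ℝ) * (∑ i ∈ Finset.range w, ((i : ℝ) + 1))
          - ∑ i ∈ Finset.range w, (i : ℝ) * ((i : ℝ) + 1)) / ((w : ℝ) + 1) := by
        rw [Finset.mul_sum, ← Finset.sum_sub_distrib]
        congr 1
        exact Finset.sum_congr rfl fun i _ => by ring
    _ = (w : ℝ) * ((w : ℝ) + 2) / 6 := by
        rw [stmt13_sum1, stmt13_sum2]
        field_simp
        ring
end

section
/- Let m ≥ 1 and p ≥ 2 be integers and n = mp. Let C_n be the cycle graph on n vertices with Laplacian L, let S be any set of m vertices (the noise-free leaders), let F be its complement, and let L_F be the principal submatrix of L on F (the grounded Laplacian). Then L_F is positive definite and tr((L_F)⁻¹) ≥ m(p − 1)(p + 1)/6, with equality if and only if the leaders are uniformly distributed around the cycle, i.e., every pair of cyclically consecutive leaders is at geodesic distance p. Hence the uniformly spaced leader sets are exactly the optimal sets of m noise-free leaders on C_n. -/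
open Matrix Finset
open scoped Classical

set_option linter.unusedSectionVars false
set_option linter.unusedVariables false
set_option maxHeartbeats 1000000

namespace Stmt16Aux
variable {n : ℕ} [NeZero n] {S : Finset (ZMod n)}

/-- distance (≥ 0) back to the nearest leader -/
noncomputable def DD (S : Finset (ZMod n)) (x : ZMod n) : ℕ :=
  if h : ∃ t : ℕ, x - (t : ZMod n) ∈ S then Nat.find h else 0

/-- distance (≥ 1) forward to the nearest leader -/
noncomputable def GG (S : Finset (ZMod n)) (x : ZMod n) : ℕ :=
  if h : ∃ t : ℕ, 1 ≤ t ∧ x + (t : ZMod n) ∈ S then Nat.find h else 0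

lemma cast_val_eq (a : ZMod n) : ((a.val : ℕ) : ZMod n) = a := by
  simp [ZMod.natCast_val, ZMod.cast_id]

lemma val_ne_zero {a : ZMod n} (h : a ≠ 0) : 1 ≤ a.val := by
  rcases Nat.eq_zero_or_pos a.val with h0 | h1
  · exact absurd (by rw [← cast_val_eq a, h0]; simp) h
  · exact h1

lemma DD_exists (hS : S.Nonempty) (x : ZMod n) : ∃ t : ℕ, x - (t : ZMod n) ∈ S := by
  obtain ⟨s, hs⟩ := hS
  exact ⟨(x - s).val, by rw [cast_val_eq]; simpa using hs⟩

lemma GG_exists (hS : S.Nonempty) (x : ZMod n) : ∃ t : ℕ, 1 ≤ t ∧ x + (t : ZMod n) ∈ S := by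
  obtain ⟨s, hs⟩ := hS
  rcases eq_or_ne s x with rfl | hne
  · exact ⟨n, Nat.one_le_iff_ne_zero.2 (NeZero.ne n), by simp [ZMod.natCast_self, hs]⟩
  · refine ⟨(s - x).val, val_ne_zero (sub_ne_zero.2 hne), ?_⟩
    rw [cast_val_eq]; simpa using hs

lemma DD_mem (hS : S.Nonempty) (x : ZMod n) : x - (DD S x : ZMod n) ∈ S := by
  rw [DD, dif_pos (DD_exists hS x)]
  exact Nat.find_spec (DD_exists hS x)

lemma DD_min (hS : S.Nonempty) (x : ZMod n) {t : ℕ} (ht : t < DD S x) :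
    x - (t : ZMod n) ∉ S := by
  rw [DD, dif_pos (DD_exists hS x)] at ht
  exact Nat.find_min (DD_exists hS x) ht

lemma DD_eq (hS : S.Nonempty) (x : ZMod n) {k : ℕ} (hk : x - (k : ZMod n) ∈ S)
    (hmin : ∀ t < k, x - (t : ZMod n) ∉ S) : DD S x = k := by
  rw [DD, dif_pos (DD_exists hS x)]
  exact le_antisymm (Nat.find_le hk) (Nat.le_of_not_lt fun h => hmin _ h (Nat.find_spec (DD_exists hS x)))

lemma GG_one_le (hS : S.Nonempty) (x : ZMod n) : 1 ≤ GG S x := by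
  rw [GG, dif_pos (GG_exists hS x)]
  exact (Nat.find_spec (GG_exists hS x)).1

lemma GG_mem (hS : S.Nonempty) (x : ZMod n) : x + (GG S x : ZMod n) ∈ S := by
  rw [GG, dif_pos (GG_exists hS x)]
  exact (Nat.find_spec (GG_exists hS x)).2

lemma GG_min (hS : S.Nonempty) (x : ZMod n) {t : ℕ} (h1 : 1 ≤ t) (ht : t < GG S x) :
    x + (t : ZMod n) ∉ S := by
  rw [GG, dif_pos (GG_exists hS x)] at ht
  exact fun hmem => Nat.find_min (GG_exists hS x) ht ⟨h1, hmem⟩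

lemma GG_eq (hS : S.Nonempty) (x : ZMod n) {k : ℕ} (h1 : 1 ≤ k) (hk : x + (k : ZMod n) ∈ S)
    (hmin : ∀ t, 1 ≤ t → t < k → x + (t : ZMod n) ∉ S) : GG S x = k := by
  rw [GG, dif_pos (GG_exists hS x)]
  refine le_antisymm (Nat.find_le ⟨h1, hk⟩) (Nat.le_of_not_lt fun h => ?_)
  obtain ⟨h1', h2'⟩ := Nat.find_spec (GG_exists hS x)
  exact hmin _ h1' h h2'

lemma DD_eq_zero (hx : x ∈ S) : DD S x = 0 :=
  DD_eq ⟨x, hx⟩ x (by simpa using hx) (fun t ht => absurd ht (Nat.not_lt_zero t))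

lemma DD_pos (hS : S.Nonempty) (hx : x ∉ S) : 1 ≤ DD S x := by
  rcases Nat.eq_zero_or_pos (DD S x) with h0 | h1
  · have := DD_mem hS x; rw [h0] at this; simp at this; exact absurd this hx
  · exact h1

lemma GG_le (hS : S.Nonempty) (x : ZMod n) : GG S x ≤ n := by
  rw [GG, dif_pos (GG_exists hS x)]
  obtain ⟨s, hs⟩ := hS
  rcases eq_or_ne s x with rfl | hne
  · exact Nat.find_le ⟨Nat.one_le_iff_ne_zero.2 (NeZero.ne n), by simp [ZMod.natCast_self, hs]⟩
  · exact le_trans (Nat.find_le ⟨val_ne_zero (sub_ne_zero.2 hne), by rw [cast_val_eq]; simpa using hs⟩)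
      (le_of_lt (ZMod.val_lt _))


lemma GG_leader (hS : S.Nonempty) (x : ZMod n) :
    GG S (x - (DD S x : ZMod n)) = DD S x + GG S x := by
  apply GG_eq hS
  · have := GG_one_le hS x; omega
  · push_cast
    rw [sub_add_eq_add_sub, add_sub_assoc]
    simpa using GG_mem hS x
  · intro t h1 ht
    by_cases hle : t ≤ DD S x
    · rcases lt_or_eq_of_le hle with hlt | heq
      · have : x - (DD S x : ZMod n) + (t : ZMod n) = x - ((DD S x - t : ℕ) : ZMod n) := by
          push_cast [Nat.cast_sub (le_of_lt hlt)]
          ring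
        rw [this]
        exact DD_min hS x (by omega)
      · subst heq
        have hx : x ∉ S := by
          intro hx
          have := DD_eq_zero hx
          omega
        have : x - (DD S x : ZMod n) + (DD S x : ZMod n) = x := by ring
        rw [this]; exact hx
    · have : x - (DD S x : ZMod n) + (t : ZMod n) = x + ((t - DD S x : ℕ) : ZMod n) := by
        push_cast [Nat.cast_sub (le_of_not_ge hle)]
        ring
      rw [this]
      exact GG_min hS x (by omega) (by omega)

lemma same_arc_den (hS : S.Nonempty) {x y : ZMod n}
    (hxy : x - (DD S x : ZMod n) = y - (DD S y : ZMod n)) :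
    DD S x + GG S x = DD S y + GG S y := by
  rw [← GG_leader hS x, ← GG_leader hS y, hxy]

-- neighbor lemmas
lemma DD_sub_one (hS : S.Nonempty) {x : ZMod n} (hx : x ∉ S) :
    DD S (x - 1) = DD S x - 1 := by
  have h1 : 1 ≤ DD S x := DD_pos hS hx
  apply DD_eq hS
  · have : x - 1 - ((DD S x - 1 : ℕ) : ZMod n) = x - (DD S x : ZMod n) := by
      push_cast [Nat.cast_sub h1]; ring
    rw [this]; exact DD_mem hS x
  · intro t ht
    have : x - 1 - (t : ZMod n) = x - ((t + 1 : ℕ) : ZMod n) := by push_cast; ring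
    rw [this]
    exact DD_min hS x (by omega)

lemma GG_sub_one (hS : S.Nonempty) {x : ZMod n} (hx : x ∉ S) :
    GG S (x - 1) = GG S x + 1 := by
  apply GG_eq hS
  · omega
  · have : x - 1 + ((GG S x + 1 : ℕ) : ZMod n) = x + (GG S x : ZMod n) := by push_cast; ring
    rw [this]; exact GG_mem hS x
  · intro t h1 ht
    rcases eq_or_lt_of_le h1 with heq | hlt
    · rw [← heq]
      have : x - 1 + ((1 : ℕ) : ZMod n) = x := by push_cast; ring
      rw [this]; exact hx
    · have : x - 1 + (t : ZMod n) = x + ((t - 1 : ℕ) : ZMod n) := by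
        push_cast [Nat.cast_sub (by omega : 1 ≤ t)]; ring
      rw [this]
      exact GG_min hS x (by omega) (by omega)

lemma DD_add_one (hS : S.Nonempty) {x : ZMod n} (hx1 : x + 1 ∉ S) :
    DD S (x + 1) = DD S x + 1 := by
  apply DD_eq hS
  · have : x + 1 - ((DD S x + 1 : ℕ) : ZMod n) = x - (DD S x : ZMod n) := by push_cast; ring
    rw [this]; exact DD_mem hS x
  · intro t ht
    rcases Nat.eq_zero_or_pos t with rfl | h1
    · simpa using hx1
    · have : x + 1 - (t : ZMod n) = x - ((t - 1 : ℕ) : ZMod n) := by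
        push_cast [Nat.cast_sub h1]; ring
      rw [this]
      exact DD_min hS x (by omega)

lemma GG_add_one (hS : S.Nonempty) {x : ZMod n} (hx1 : x + 1 ∉ S) :
    GG S (x + 1) = GG S x - 1 := by
  have h2 : 2 ≤ GG S x := by
    have h1 := GG_one_le hS x
    rcases eq_or_lt_of_le h1 with heq | hlt
    · exfalso; apply hx1; have := GG_mem hS x; rw [← heq] at this; simpa using this
    · omega
  apply GG_eq hS
  · omega
  · have : x + 1 + ((GG S x - 1 : ℕ) : ZMod n) = x + (GG S x : ZMod n) := by
      push_cast [Nat.cast_sub (by omega : 1 ≤ GG S x)]; ring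
    rw [this]; exact GG_mem hS x
  · intro t h1 ht
    have : x + 1 + (t : ZMod n) = x + ((t + 1 : ℕ) : ZMod n) := by push_cast; ring
    rw [this]
    exact GG_min hS x (by omega) (by omega)

lemma DD_one_of_left_leader (hS : S.Nonempty) {x : ZMod n} (hx : x - 1 ∈ S) (hxS : x ∉ S) :
    DD S x = 1 := by
  apply DD_eq hS
  · simpa using hx
  · intro t ht
    interval_cases t
    simpa using hxS

lemma GG_one_of_right_leader (hS : S.Nonempty) {x : ZMod n} (hx : x + 1 ∈ S) :
    GG S x = 1 := by
  apply GG_eq hS _ le_rfl (by simpa using hx)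
  intro t h1 ht; omega

-- offset lemma (for trace computation / partition)
lemma DD_offset (hS : S.Nonempty) {s : ZMod n} (hs : s ∈ S) {k : ℕ} (hk : k < GG S s) :
    DD S (s + (k : ZMod n)) = k := by
  apply DD_eq hS
  · simpa using hs
  · intro t ht
    have : s + (k : ZMod n) - (t : ZMod n) = s + ((k - t : ℕ) : ZMod n) := by
      push_cast [Nat.cast_sub (le_of_lt ht)]; ring
    rw [this]
    exact GG_min hS s (by omega) (by omega)

lemma GG_offset (hS : S.Nonempty) {s : ZMod n} (hs : s ∈ S) {k : ℕ} (h1 : 1 ≤ k)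
    (hk : k < GG S s) : GG S (s + (k : ZMod n)) = GG S s - k := by
  apply GG_eq hS
  · omega
  · have : s + (k : ZMod n) + ((GG S s - k : ℕ) : ZMod n) = s + (GG S s : ZMod n) := by
      push_cast [Nat.cast_sub (le_of_lt hk)]; ring
    rw [this]; exact GG_mem hS s
  · intro t ht1 ht
    have : s + (k : ZMod n) + (t : ZMod n) = s + ((k + t : ℕ) : ZMod n) := by push_cast; ring
    rw [this]
    exact GG_min hS s (by omega) (by omega)

lemma offset_not_mem (hS : S.Nonempty) {s : ZMod n} (hs : s ∈ S) {k : ℕ} (h1 : 1 ≤ k)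
    (hk : k < GG S s) : s + (k : ZMod n) ∉ S :=
  GG_min hS s h1 hk


-- every x lies in the fiber of its left leader
lemma fiber_repr (hS : S.Nonempty) (x : ZMod n) :
    ∃ s ∈ S, ∃ k < GG S s, x = s + (k : ZMod n) := by
  refine ⟨x - (DD S x : ZMod n), DD_mem hS x, DD S x, ?_, by ring⟩
  rw [GG_leader hS x]
  have := GG_one_le hS x
  omega

-- injectivity of k ↦ s + k on range (GG S s)
lemma fiber_inj (hS : S.Nonempty) {s : ZMod n} (hs : s ∈ S) :
    Set.InjOn (fun k : ℕ => s + (k : ZMod n)) (Finset.range (GG S s)) := by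
  intro a ha b hb hab
  simp only [Finset.coe_range, Set.mem_Iio] at ha hb
  have hn := GG_le hS s
  have h1 : ((a : ZMod n)) = (b : ZMod n) := by
    have := hab; simpa using this
  have : (a : ZMod n).val = (b : ZMod n).val := by rw [h1]
  rwa [ZMod.val_natCast_of_lt (by omega), ZMod.val_natCast_of_lt (by omega)] at this

-- fibers are disjoint: left leader is determined
lemma fiber_eq_leader (hS : S.Nonempty) {s : ZMod n} (hs : s ∈ S) {k : ℕ} (hk : k < GG S s) :
    (s + (k : ZMod n)) - (DD S (s + (k : ZMod n)) : ZMod n) = s := by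
  rw [DD_offset hS hs hk]; ring

-- the grand regrouping of a sum over ZMod n
lemma sum_regroup (hS : S.Nonempty) (f : ZMod n → ℝ) :
    ∑ x : ZMod n, f x = ∑ s ∈ S, ∑ k ∈ Finset.range (GG S s), f (s + (k : ZMod n)) := by
  have key : Finset.univ = S.biUnion (fun s => (Finset.range (GG S s)).image (fun k : ℕ => s + (k : ZMod n))) := by
    apply Finset.ext
    intro x
    simp only [Finset.mem_univ, true_iff, Finset.mem_biUnion, Finset.mem_image, Finset.mem_range]
    obtain ⟨s, hs, k, hk, hx⟩ := fiber_repr hS x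
    exact ⟨s, hs, k, hk, hx.symm⟩
  rw [key, Finset.sum_biUnion, ]
  · apply Finset.sum_congr rfl
    intro s hs
    rw [Finset.sum_image]
    intro a ha b hb hab
    exact fiber_inj hS hs ha hb hab
  · intro s hs t ht hst
    apply Finset.disjoint_left.2
    intro x hx1 hx2
    simp only [Finset.mem_coe, Finset.mem_image, Finset.mem_range] at hx1 hx2
    obtain ⟨k1, hk1, he1⟩ := hx1
    obtain ⟨k2, hk2, he2⟩ := hx2
    apply hst
    have e1 := fiber_eq_leader hS hs hk1
    have e2 := fiber_eq_leader hS ht hk2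
    rw [he1] at e1
    rw [he2] at e2
    rw [← e1, ← e2]

lemma card_eq_sum_GG (hS : S.Nonempty) : (n : ℝ) = ∑ s ∈ S, (GG S s : ℝ) := by
  have := sum_regroup hS (fun _ => (1 : ℝ))
  simpa [ZMod.card] using this

lemma GG_ge_two (hS : S.Nonempty) {x : ZMod n} (hx1 : x + 1 ∉ S) : 2 ≤ GG S x := by
  by_contra h
  have h1 := GG_one_le hS x
  have heq : GG S x = 1 := by omega
  have hmem := GG_mem hS x
  rw [heq] at hmem
  exact hx1 (by simpa using hmem)

noncomputable def MM (S : Finset (ZMod n)) (x y : ZMod n) : ℝ :=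
  if x ∉ S ∧ y ∉ S ∧ x - (DD S x : ZMod n) = y - (DD S y : ZMod n)
  then ((min (DD S x) (DD S y) * min (GG S x) (GG S y) : ℕ) : ℝ) / ((DD S x + GG S x : ℕ) : ℝ)
  else 0

lemma MM_of_mem_left {x y : ZMod n} (hx : x ∈ S) : MM S x y = 0 := by
  rw [MM, if_neg]; tauto

lemma MM_of_mem_right {x y : ZMod n} (hy : y ∈ S) : MM S x y = 0 := by
  rw [MM, if_neg]; tauto

-- same-arc condition transfers to left neighbor
lemma arc_sub_one (hS : S.Nonempty) {i : ZMod n} (hi : i ∉ S) (hi1 : i - 1 ∉ S) :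
    (i - 1) - (DD S (i - 1) : ZMod n) = i - (DD S i : ZMod n) := by
  rw [DD_sub_one hS hi, Nat.cast_sub (DD_pos hS hi)]
  push_cast
  ring

lemma arc_add_one (hS : S.Nonempty) {i : ZMod n} (hi1 : i + 1 ∉ S) :
    (i + 1) - (DD S (i + 1) : ZMod n) = i - (DD S i : ZMod n) := by
  rw [DD_add_one hS hi1]
  push_cast
  ring

/-- THE core row identity. -/
lemma row_identity (hS : S.Nonempty) {i j : ZMod n} (hi : i ∉ S) (hj : j ∉ S) :
    2 * MM S i j - MM S (i - 1) j - MM S (i + 1) j = if i = j then (1:ℝ) else 0 := by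
  set a := DD S i with ha_def
  set b := DD S j with hb_def
  set u := GG S i with hu_def
  set v := GG S j with hv_def
  have ha : 1 ≤ a := DD_pos hS hi
  have hb : 1 ≤ b := DD_pos hS hj
  have hu : 1 ≤ u := GG_one_le hS i
  have hv : 1 ≤ v := GG_one_le hS j
  by_cases hc : i - (a : ZMod n) = j - (b : ZMod n)
  · -- same arc
    have hden : a + u = b + v := same_arc_den hS hc
    have hdenR : ((a : ℝ) + u) ≠ 0 := by positivity
    have hij_iff : i = j ↔ a = b := by
      constructor
      · intro h; rw [ha_def, hb_def, h]
      · intro h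
        have : i - (a : ZMod n) + (a : ZMod n) = j - (b : ZMod n) + (b : ZMod n) := by
          rw [hc, h]
        simpa using this
    have hMij : MM S i j = ((min a b * min u v : ℕ) : ℝ) / ((a + u : ℕ) : ℝ) := by
      rw [MM, if_pos ⟨hi, hj, hc⟩]
    -- left neighbor value
    have hTL : MM S (i - 1) j =
        (if i - 1 ∈ S then 0 else ((min (a-1) b * min (u+1) v : ℕ) : ℝ) / ((a + u : ℕ) : ℝ)) := by
      by_cases hm : i - 1 ∈ S
      · rw [if_pos hm, MM_of_mem_left hm]
      · rw [if_neg hm, MM, if_pos ⟨hm, hj, (arc_sub_one hS hi hm).trans hc⟩,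
          DD_sub_one hS hi, GG_sub_one hS hi]
        congr 2
        omega
    have hTR : MM S (i + 1) j =
        (if i + 1 ∈ S then 0 else ((min (a+1) b * min (u-1) v : ℕ) : ℝ) / ((a + u : ℕ) : ℝ)) := by
      by_cases hm : i + 1 ∈ S
      · rw [if_pos hm, MM_of_mem_left hm]
      · rw [if_neg hm, MM, if_pos ⟨hm, hj, (arc_add_one hS hm).trans hc⟩,
          DD_add_one hS hm, GG_add_one hS hm]
        congr 2
        omega
    rcases lt_trichotomy a b with hab | hab | hab
    · -- a < b : i ≠ j, result 0
      rw [if_neg (fun h => absurd (hij_iff.mp h) (Nat.ne_of_lt hab))]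
      have huv : v < u := by omega
      have hR : i + 1 ∉ S := by
        intro hmem
        have : u = 1 := GG_one_of_right_leader hS hmem
        omega
      rw [hMij, hTL, hTR, if_neg hR]
      have e1 : min a b = a := min_eq_left (le_of_lt hab)
      have e2 : min u v = v := min_eq_right (le_of_lt huv)
      have e3 : min (a+1) b = a+1 := min_eq_left (by omega)
      have e4 : min (u-1) v = v := min_eq_right (by omega)
      by_cases hm : i - 1 ∈ S
      · rw [if_pos hm]
        have ha1 : a = 1 := DD_one_of_left_leader hS hm hi
        rw [e1, e2, e3, e4, ha1]
        push_cast
        field_simp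
        try ring
      · rw [if_neg hm]
        have e5 : min (a-1) b = a-1 := min_eq_left (by omega)
        have e6 : min (u+1) v = v := min_eq_right (by omega)
        rw [e1, e2, e3, e4, e5, e6]
        have : ((a - 1 : ℕ) : ℝ) = (a : ℝ) - 1 := by
          push_cast [Nat.cast_sub ha]; ring
        push_cast [Nat.cast_sub ha]
        field_simp
        try ring
    · -- a = b : i = j, result 1
      rw [if_pos (hij_iff.mpr hab)]
      have huv : u = v := by omega
      have e1 : min a b = a := by omega
      have e2 : min u v = u := by omega
      rw [hMij, hTL, hTR, e1, e2]
      by_cases hmL : i - 1 ∈ S <;> by_cases hmR : i + 1 ∈ S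
      · have ha1 : a = 1 := DD_one_of_left_leader hS hmL hi
        have hu1 : u = 1 := GG_one_of_right_leader hS hmR
        rw [if_pos hmL, if_pos hmR, ha1, hu1]
        norm_num
      · have ha1 : a = 1 := DD_one_of_left_leader hS hmL hi
        have hu2 : 2 ≤ u := GG_ge_two hS hmR
        have e3 : min (a+1) b = a := by omega
        have e4 : min (u-1) v = u-1 := by omega
        rw [if_pos hmL, if_neg hmR, e3, e4, ha1]
        push_cast [Nat.cast_sub (by omega : 1 ≤ u)]
        have h0 : (1 : ℝ) + (u:ℝ) ≠ 0 := by positivity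
        field_simp
        try ring
      · have hu1 : u = 1 := GG_one_of_right_leader hS hmR
        have e3 : min (a-1) b = a-1 := by omega
        have e4 : min (u+1) v = u := by omega
        rw [if_neg hmL, if_pos hmR, e3, e4, hu1]
        push_cast [Nat.cast_sub ha]
        have h0 : (a : ℝ) + 1 ≠ 0 := by positivity
        field_simp
        try ring
      · have hu2 : 2 ≤ u := GG_ge_two hS hmR
        have e3 : min (a-1) b = a-1 := by omega
        have e4 : min (u+1) v = u := by omega
        have e5 : min (a+1) b = a := by omega
        have e6 : min (u-1) v = u-1 := by omega
        rw [if_neg hmL, if_neg hmR, e3, e4, e5, e6]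
        push_cast [Nat.cast_sub ha, Nat.cast_sub (by omega : 1 ≤ u)]
        field_simp
        try ring
    · -- b < a : i ≠ j, result 0
      rw [if_neg (fun h => absurd (hij_iff.mp h) (Nat.ne_of_gt hab))]
      have huv : u < v := by omega
      have hL : i - 1 ∉ S := by
        intro hmem
        have : a = 1 := DD_one_of_left_leader hS hmem hi
        omega
      rw [hMij, hTL, hTR, if_neg hL]
      have e1 : min a b = b := min_eq_right (le_of_lt hab)
      have e2 : min u v = u := min_eq_left (le_of_lt huv)
      have e3 : min (a-1) b = b := min_eq_right (by omega)
      have e4 : min (u+1) v = u+1 := min_eq_left (by omega)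
      by_cases hm : i + 1 ∈ S
      · rw [if_pos hm]
        have hu1 : u = 1 := GG_one_of_right_leader hS hm
        rw [e1, e2, e3, e4, hu1]
        push_cast
        field_simp
        try ring
      · rw [if_neg hm]
        have hu2 : 2 ≤ u := GG_ge_two hS hm
        have e5 : min (a+1) b = b := min_eq_right (by omega)
        have e6 : min (u-1) v = u-1 := min_eq_left (by omega)
        rw [e1, e2, e3, e4, e5, e6]
        push_cast [Nat.cast_sub (by omega : 1 ≤ u)]
        field_simp
        try ring
  · -- different arcs: everything 0
    rw [if_neg (by rintro rfl; exact hc rfl)]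
    have h1 : MM S i j = 0 := by rw [MM, if_neg]; tauto
    have h2 : MM S (i - 1) j = 0 := by
      by_cases hm : i - 1 ∈ S
      · exact MM_of_mem_left hm
      · rw [MM, if_neg]
        rintro ⟨-, -, hc'⟩
        exact hc ((arc_sub_one hS hi hm).symm.trans hc')
    have h3 : MM S (i + 1) j = 0 := by
      by_cases hm : i + 1 ∈ S
      · exact MM_of_mem_left hm
      · rw [MM, if_neg]
        rintro ⟨-, -, hc'⟩
        exact hc ((arc_add_one hS hm).symm.trans hc')
    rw [h1, h2, h3]
    ring


lemma n_eq_one_of_one_eq_zero (h : (1 : ZMod n) = 0) : n = 1 := by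
  have : ((1 : ℕ) : ZMod n) = 0 := by simpa using h
  exact Nat.dvd_one.1 ((ZMod.natCast_eq_zero_iff 1 n).1 this)

lemma two_cases (h2 : (2 : ZMod n) = 0) (h1 : (1 : ZMod n) ≠ 0) (x i : ZMod n)
    (hx : x ≠ i) : x = i + 1 := by
  have h2' : ((2 : ℕ) : ZMod n) = 0 := by simpa using h2
  have hd := (ZMod.natCast_eq_zero_iff 2 n).1 h2'
  have hle : n ≤ 2 := Nat.le_of_dvd (by norm_num) hd
  have hge : 1 ≤ n := Nat.one_le_iff_ne_zero.2 (NeZero.ne n)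
  have hn2 : n = 2 := by
    interval_cases n
    · exact absurd (Subsingleton.elim (1 : ZMod 1) 0) h1
    · rfl
  subst hn2
  revert hx
  revert x i
  decide

/-- the matrix-product row sum. -/
lemma product_row (hS : S.Nonempty) {i j : ZMod n} (hi : i ∉ S) (hj : j ∉ S) :
    ∑ k : ZMod n, (if i = k then (2:ℝ) else if i - k = 1 ∨ k - i = 1 then -1 else 0) * MM S k j
      = if i = j then (1:ℝ) else 0 := by
  have hone : (1 : ZMod n) ≠ 0 := by
    intro h
    have hn1 := n_eq_one_of_one_eq_zero h
    obtain ⟨s, hs⟩ := hS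
    subst hn1
    exact hi (by rwa [Subsingleton.elim i s])
  have key : ∀ k : ZMod n,
      (if i = k then (2:ℝ) else if i - k = 1 ∨ k - i = 1 then -1 else 0) * MM S k j
      = 2 * (if k = i then MM S k j else 0)
        - (if k = i - 1 then MM S k j else 0)
        - (if k = i + 1 then MM S k j else 0) := by
    intro k
    by_cases hk : k = i
    · subst hk
      rw [if_pos rfl, if_pos rfl,
        if_neg (fun h : k = k - 1 => hone (by linear_combination h)),
        if_neg (fun h : k = k + 1 => hone (by linear_combination -h))]
      ring
    · rw [if_neg (fun h => hk h.symm), if_neg hk]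
      by_cases hk1 : k = i + 1 <;> by_cases hk2 : k = i - 1
      · -- coincidence : n = 2
        have e : i + 1 = i - 1 := by rw [← hk1, hk2]
        have h2 : (2 : ZMod n) = 0 := by linear_combination e
        have hkS : k ∈ S := by
          obtain ⟨s, hs⟩ := hS
          have hsk : s = k := by
            rw [hk1]; exact two_cases h2 hone s i (fun h => hi (h ▸ hs))
          exact hsk ▸ hs
        rw [MM_of_mem_left hkS, if_pos (Or.inr (by rw [hk1]; ring)), if_pos hk2, if_pos hk1]
        ring
      · rw [if_pos (Or.inr (by rw [hk1]; ring)), if_neg hk2, if_pos hk1]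
        ring
      · rw [if_pos (Or.inl (by rw [hk2]; ring)), if_pos hk2, if_neg hk1]
        ring
      · rw [if_neg, if_neg hk2, if_neg hk1]
        · ring
        · rintro (h | h)
          · exact hk2 (by linear_combination -h)
          · exact hk1 (by linear_combination h)
  rw [Finset.sum_congr rfl (fun k _ => key k)]
  rw [Finset.sum_sub_distrib, Finset.sum_sub_distrib, ← Finset.mul_sum]
  rw [Finset.sum_ite_eq' Finset.univ i (fun k => MM S k j),
    Finset.sum_ite_eq' Finset.univ (i-1) (fun k => MM S k j),
    Finset.sum_ite_eq' Finset.univ (i+1) (fun k => MM S k j)]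
  simp only [Finset.mem_univ, if_pos]
  have := row_identity hS hi hj
  linarith [this]


lemma const_of_step (y : ZMod n → ℝ) (hstep : ∀ i : ZMod n, y i = y (i + 1)) :
    ∀ x z : ZMod n, y x = y z := by
  have key : ∀ (k : ℕ) (x : ZMod n), y (x + (k : ZMod n)) = y x := by
    intro k
    induction k with
    | zero => intro x; simp
    | succ k ih =>
      intro x
      have : x + ((k+1 : ℕ) : ZMod n) = (x + (k : ZMod n)) + 1 := by push_cast; ring
      rw [this, ← hstep (x + (k : ZMod n)), ih]
  intro x z
  have : x = z + (((x - z).val : ℕ) : ZMod n) := by rw [cast_val_eq]; ring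
  rw [this, key]

lemma quad_pos (hS : S.Nonempty) (y : ZMod n → ℝ) (hy0 : ∀ s ∈ S, y s = 0)
    (hne : ∃ i, y i ≠ 0) :
    0 < ∑ i : ZMod n, ∑ j : ZMod n, y i *
      ((if i = j then (2:ℝ) else if i - j = 1 ∨ j - i = 1 then -1 else 0) * y j) := by
  obtain ⟨w, hw⟩ := hne
  have hone : (1 : ZMod n) ≠ 0 := by
    intro h
    obtain ⟨s, hs⟩ := hS
    have hn1 := n_eq_one_of_one_eq_zero h
    subst hn1
    exact hw (by rw [Subsingleton.elim w s]; exact hy0 s hs)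
  have key : ∀ i j : ZMod n, y i *
      ((if i = j then (2:ℝ) else if i - j = 1 ∨ j - i = 1 then -1 else 0) * y j)
      = 2 * (if j = i then y i * y j else 0)
        - (if j = i - 1 then y i * y j else 0)
        - (if j = i + 1 then y i * y j else 0) := by
    intro i j
    by_cases hk : j = i
    · subst hk
      rw [if_pos rfl, if_pos rfl,
        if_neg (fun h : j = j - 1 => hone (by linear_combination h)),
        if_neg (fun h : j = j + 1 => hone (by linear_combination -h))]
      ring
    · have hij : ¬ i = j := fun h => hk h.symm
      by_cases hk1 : j = i + 1 <;> by_cases hk2 : j = i - 1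
      · -- coincidence : n = 2 ; here y i * y j = 0 since S covers {i, i+1}
        have e : i + 1 = i - 1 := by rw [← hk1, hk2]
        have h2 : (2 : ZMod n) = 0 := by linear_combination e
        have hz : y i * y j = 0 := by
          obtain ⟨s, hs⟩ := hS
          by_cases hsi : s = i
          · rw [← hsi, hy0 s hs]; ring
          · have hsj : j = s := by rw [hk1, two_cases h2 hone s i hsi]
            rw [hsj, hy0 s hs]; ring
        simp only [if_neg hij, if_pos (Or.inr (show j - i = 1 by rw [hk1]; ring)),
          if_neg hk, if_pos hk1, if_pos hk2]
        linarith [hz]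
      · simp only [if_neg hij, if_pos (Or.inr (show j - i = 1 by rw [hk1]; ring)),
          if_neg hk, if_pos hk1, if_neg hk2]
        ring
      · simp only [if_neg hij, if_pos (Or.inl (show i - j = 1 by rw [hk2]; ring)),
          if_neg hk, if_neg hk1, if_pos hk2]
        ring
      · simp only [if_neg hij, if_neg hk, if_neg hk1, if_neg hk2,
          if_neg (show ¬(i - j = 1 ∨ j - i = 1) by
            rintro (h | h)
            · exact hk2 (by linear_combination -h)
            · exact hk1 (by linear_combination h))]
        ring
  have rows : ∀ i : ZMod n,
      ∑ j : ZMod n, y i *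
        ((if i = j then (2:ℝ) else if i - j = 1 ∨ j - i = 1 then -1 else 0) * y j)
      = 2 * (y i * y i) - y i * y (i - 1) - y i * y (i + 1) := by
    intro i
    rw [Finset.sum_congr rfl (fun j _ => key i j)]
    rw [Finset.sum_sub_distrib, Finset.sum_sub_distrib, ← Finset.mul_sum]
    rw [Finset.sum_ite_eq' Finset.univ i (fun j => y i * y j),
      Finset.sum_ite_eq' Finset.univ (i-1) (fun j => y i * y j),
      Finset.sum_ite_eq' Finset.univ (i+1) (fun j => y i * y j)]
    simp only [Finset.mem_univ, if_pos]
  rw [Finset.sum_congr rfl (fun i _ => rows i)]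
  have r1 : ∑ i : ZMod n, y (i + 1) * y i = ∑ i : ZMod n, y i * y (i - 1) := by
    apply Fintype.sum_equiv (Equiv.addRight (1 : ZMod n))
    intro i
    simp [Equiv.coe_addRight]
  have r2 : ∑ i : ZMod n, y (i + 1) * y (i + 1) = ∑ i : ZMod n, y i * y i := by
    apply Fintype.sum_equiv (Equiv.addRight (1 : ZMod n))
    intro i
    simp [Equiv.coe_addRight]
  have h2sum : ∑ i : ZMod n, 2 * (y i * y i) = 2 * ∑ i : ZMod n, y i * y i := by
    rw [Finset.mul_sum]
  have total : ∑ i : ZMod n, (2 * (y i * y i) - y i * y (i - 1) - y i * y (i + 1))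
      = ∑ i : ZMod n, (y i - y (i + 1))^2 := by
    have expand : ∀ i : ZMod n, (y i - y (i + 1))^2
        = (y i * y i + y (i+1) * y (i+1)) - y (i+1) * y i - y i * y (i + 1) := by
      intro i; ring
    rw [Finset.sum_congr rfl (fun i _ => expand i)]
    rw [Finset.sum_sub_distrib, Finset.sum_sub_distrib, Finset.sum_sub_distrib,
      Finset.sum_sub_distrib, Finset.sum_add_distrib, h2sum, ← r1, r2]
    ring
  rw [total]
  have hnn : ∀ i ∈ Finset.univ, (0:ℝ) ≤ (y i - y (i + 1))^2 := fun i _ => sq_nonneg _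
  rcases (Finset.sum_nonneg hnn).lt_or_eq with h | h
  · exact h
  · exfalso
    have hall := (Finset.sum_eq_zero_iff_of_nonneg hnn).1 h.symm
    have hstep : ∀ i : ZMod n, y i = y (i + 1) := by
      intro i
      have := hall i (Finset.mem_univ i)
      have := sq_eq_zero_iff.1 this
      linarith
    obtain ⟨s, hs⟩ := hS
    exact hw ((const_of_step y hstep w s).trans (hy0 s hs) ▸ rfl)

lemma gauss_lin (G : ℕ) : ∑ k ∈ Finset.range (G+1), (k : ℝ) = (G : ℝ) * ((G:ℝ)+1) / 2 := by
  induction G with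
  | zero => simp
  | succ G ih => rw [Finset.sum_range_succ, ih]; push_cast; ring

-- Gauss-type sum over ℝ
lemma gauss_sum (G : ℕ) :
    ∑ k ∈ Finset.range G, ((k : ℝ) * ((G : ℝ) - (k : ℝ))) = (G:ℝ)*((G:ℝ)-1)*((G:ℝ)+1)/6 := by
  induction G with
  | zero => simp
  | succ G ih =>
    have split : ∀ k ∈ Finset.range (G+1),
        (k : ℝ) * (((G+1 : ℕ) : ℝ) - (k : ℝ)) = (k : ℝ) * ((G : ℝ) - (k : ℝ)) + (k : ℝ) := by
      intro k _; push_cast; ring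
    rw [Finset.sum_congr rfl split, Finset.sum_add_distrib, Finset.sum_range_succ]
    have last : (G : ℝ) * ((G : ℝ) - (G : ℝ)) = 0 := by ring
    rw [last, add_zero, ih]
    rw [gauss_lin G]
    push_cast
    ring

/-- sum of diagonal entries of MM over one arc -/
lemma arc_diag_sum (hS : S.Nonempty) {s : ZMod n} (hs : s ∈ S) :
    ∑ k ∈ Finset.range (GG S s), MM S (s + (k : ZMod n)) (s + (k : ZMod n))
      = ((GG S s : ℝ)^2 - 1)/6 := by
  set G := GG S s with hG
  have hG1 : 1 ≤ G := GG_one_le hS s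
  have vals : ∀ k ∈ Finset.range G,
      MM S (s + (k : ZMod n)) (s + (k : ZMod n))
        = (k : ℝ) * ((G : ℝ) - (k : ℝ)) / (G : ℝ) := by
    intro k hk
    rw [Finset.mem_range] at hk
    rcases Nat.eq_zero_or_pos k with rfl | hk1
    · have : s + ((0:ℕ) : ZMod n) = s := by simp
      rw [this, MM_of_mem_left hs]
      simp
    · have hnot := offset_not_mem hS hs hk1 hk
      have hD := DD_offset hS hs hk
      have hGk := GG_offset hS hs hk1 hk
      rw [MM, if_pos ⟨hnot, hnot, rfl⟩, hD, hGk]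
      have e1 : min k k = k := min_self k
      have e2 : min (G - k) (G - k) = G - k := min_self _
      have e3 : k + (G - k) = G := by omega
      rw [e1, e2, e3]
      push_cast [Nat.cast_sub (le_of_lt hk)]
      ring
  rw [Finset.sum_congr rfl vals]
  have : ∑ k ∈ Finset.range G, (k : ℝ) * ((G : ℝ) - (k : ℝ)) / (G : ℝ)
      = (∑ k ∈ Finset.range G, (k : ℝ) * ((G : ℝ) - (k : ℝ))) / (G : ℝ) := by
    rw [Finset.sum_div]
  rw [this, gauss_sum]
  have hGne : (G : ℝ) ≠ 0 := Nat.cast_ne_zero.2 (by omega)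
  field_simp
  ring


lemma sum_identity {m p : ℕ} (hcard : S.card = m)
    (hsum : ∑ s ∈ S, (GG S s : ℝ) = (m : ℝ) * (p : ℝ)) :
    ∑ s ∈ S, ((GG S s : ℝ)^2 - 1)/6
      = (m : ℝ)*((p : ℝ)-1)*((p : ℝ)+1)/6 + (∑ s ∈ S, ((GG S s : ℝ) - (p:ℝ))^2)/6 := by
  have h1 : ∑ s ∈ S, ((GG S s : ℝ) - (p:ℝ))^2
      = ∑ s ∈ S, (GG S s : ℝ)^2 - 2*(p:ℝ)*(∑ s ∈ S, (GG S s : ℝ)) + (m:ℝ) * (p:ℝ)^2 := by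
    rw [Finset.sum_congr rfl (fun s _ => (by ring :
      ((GG S s:ℝ) - (p:ℝ))^2 = (GG S s:ℝ)^2 - 2*(p:ℝ)*(GG S s:ℝ) + (p:ℝ)^2)),
      Finset.sum_add_distrib, Finset.sum_sub_distrib, ← Finset.mul_sum, Finset.sum_const, hcard]
    push_cast
    ring
  have h2 : ∑ s ∈ S, ((GG S s : ℝ)^2 - 1)/6 = ((∑ s ∈ S, (GG S s : ℝ)^2) - (m:ℝ))/6 := by
    rw [← Finset.sum_div, Finset.sum_sub_distrib, Finset.sum_const, hcard]
    push_cast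
    ring
  rw [h2, h1, hsum]
  ring

lemma gaps_iff_image {m p : ℕ} (hm : 1 ≤ m) (hp : 2 ≤ p) (hn : n = m * p)
    (hcard : S.card = m) (hS : S.Nonempty) :
    (∀ s ∈ S, GG S s = p) ↔
      ∃ s₀ : ZMod n, S = Finset.image (fun i : Fin m => s₀ + ((p * i.val : ℕ) : ZMod n))
        Finset.univ := by
  constructor
  · intro h
    obtain ⟨s₀, hs₀⟩ := hS
    have hS' : S.Nonempty := ⟨s₀, hs₀⟩
    refine ⟨s₀, ?_⟩
    have step : ∀ k : ℕ, s₀ + ((p * k : ℕ) : ZMod n) ∈ S := by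
      intro k
      induction k with
      | zero => simpa using hs₀
      | succ k ih =>
        have hg := h _ ih
        have hmem := GG_mem hS' (s₀ + ((p * k : ℕ) : ZMod n))
        rw [hg] at hmem
        have e : s₀ + ((p * k : ℕ) : ZMod n) + ((p : ℕ) : ZMod n)
            = s₀ + ((p * (k+1) : ℕ) : ZMod n) := by push_cast; ring
        rwa [e] at hmem
    have hsub : Finset.image (fun i : Fin m => s₀ + ((p * i.val : ℕ) : ZMod n)) Finset.univ ⊆ S := by
      intro x hx
      obtain ⟨i, -, rfl⟩ := Finset.mem_image.1 hx
      exact step i.val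
    have hbound : ∀ i : Fin m, p * i.val < n := by
      intro i
      have := i.isLt
      rw [hn]
      nlinarith
    have hinj : Function.Injective (fun i : Fin m => s₀ + ((p * i.val : ℕ) : ZMod n)) := by
      intro i j hij
      simp only [add_right_inj] at hij
      have hvi : ((p * i.val : ℕ) : ZMod n).val = p * i.val := ZMod.val_cast_of_lt (hbound i)
      have hvj : ((p * j.val : ℕ) : ZMod n).val = p * j.val := ZMod.val_cast_of_lt (hbound j)
      have hpv : p * i.val = p * j.val := by rw [← hvi, ← hvj, hij]
      have : i.val = j.val := Nat.eq_of_mul_eq_mul_left (by omega) hpv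
      exact Fin.ext this
    have hcardim : (Finset.image (fun i : Fin m => s₀ + ((p * i.val : ℕ) : ZMod n))
        Finset.univ).card = m := by
      rw [Finset.card_image_of_injective _ hinj, Finset.card_univ, Fintype.card_fin]
    exact (Finset.eq_of_subset_of_card_le hsub (by rw [hcard, hcardim])).symm
  · rintro ⟨s₀, rfl⟩
    intro s hs
    obtain ⟨i, -, rfl⟩ := Finset.mem_image.1 hs
    have hSne : (Finset.image (fun i : Fin m => s₀ + ((p * i.val : ℕ) : ZMod n))
        Finset.univ).Nonempty := ⟨_, hs⟩
    apply GG_eq hSne _ (by omega : 1 ≤ p)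
    · -- membership of next leader
      rcases Nat.lt_or_ge (i.val + 1) m with hlt | hge
      · apply Finset.mem_image.2
        refine ⟨⟨i.val + 1, hlt⟩, Finset.mem_univ _, ?_⟩
        push_cast
        ring
      · have him : i.val + 1 = m := by have := i.isLt; omega
        apply Finset.mem_image.2
        refine ⟨⟨0, by omega⟩, Finset.mem_univ _, ?_⟩
        have e1 : ((p * i.val : ℕ) : ZMod n) + ((p : ℕ) : ZMod n)
            = ((p * i.val + p : ℕ) : ZMod n) := by push_cast; ring
        have e2 : p * i.val + p = n := by
          have e : p * i.val + p = (i.val + 1) * p := by ring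
          rw [e, him, hn]
        have e3 : ((p * i.val + p : ℕ) : ZMod n) = 0 := by rw [e2]; exact ZMod.natCast_self n
        show s₀ + ((p * (0:ℕ) : ℕ) : ZMod n) = s₀ + ((p * i.val : ℕ) : ZMod n) + ((p:ℕ) : ZMod n)
        rw [add_assoc, e1, e3]
        simp
    · -- minimality
      intro t ht1 htp hmem
      obtain ⟨j, -, hj⟩ := Finset.mem_image.1 hmem
      have hcasteq : ((p * j.val : ℕ) : ZMod n) = ((p * i.val + t : ℕ) : ZMod n) := by
        push_cast at hj ⊢
        linear_combination hj
      have hmod : (p * j.val) ≡ (p * i.val + t) [MOD n] :=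
        (ZMod.natCast_eq_natCast_iff _ _ _).1 hcasteq
      have hmodp : (p * j.val) ≡ (p * i.val + t) [MOD p] :=
        hmod.of_dvd (by rw [hn]; exact dvd_mul_left p m)
      have hmod0 : t % p = 0 := by
        have h1 : (p * j.val) % p = 0 := Nat.mul_mod_right p _
        have h2 : (p * i.val + t) % p = t % p := Nat.mul_add_mod p _ _
        unfold Nat.ModEq at hmodp
        omega
      have := Nat.le_of_dvd (by omega) (Nat.dvd_of_mod_eq_zero hmod0)
      omega

end Stmt16Aux

open Stmt16Aux

/-- Optimal `m` noise-free leaders on a cycle. Let `n = mp` with `m ≥ 1`,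
`p ≥ 2`, let `L` be the Laplacian of the cycle `C_n` (vertices `ZMod n`), let `S` be any set of
`m` leaders with complement `F = Sᶜ`, and let `L_F` be the grounded Laplacian (the principal
submatrix of `L` on `F`). Then `L_F` is positive definite and
`tr((L_F)⁻¹) ≥ m(p−1)(p+1)/6`, with equality iff the leaders are uniformly distributed around
the cycle, i.e., `S = {s₀, s₀ + p, …, s₀ + (m−1)p}` for some `s₀` (so that every pair of
cyclically consecutive leaders is at geodesic distance `p`). -/
theorem stmt_16 {m p n : ℕ} (hm : 1 ≤ m) (hp : 2 ≤ p) (hn : n = m * p) [NeZero n]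
    (L : Matrix (ZMod n) (ZMod n) ℝ)
    (hLdef : ∀ i j : ZMod n,
      L i j = if i = j then 2 else if i - j = 1 ∨ j - i = 1 then -1 else 0)
    (S : Finset (ZMod n)) (hcard : S.card = m)
    (LF : Matrix {x // x ∈ Sᶜ} {x // x ∈ Sᶜ} ℝ)
    (hLF : LF = L.submatrix (fun i : {x // x ∈ Sᶜ} => (i : ZMod n))
      (fun j : {x // x ∈ Sᶜ} => (j : ZMod n))) :
    LF.PosDef ∧
    (m : ℝ) * ((p : ℝ) - 1) * ((p : ℝ) + 1) / 6 ≤ LF⁻¹.trace ∧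
    (LF⁻¹.trace = (m : ℝ) * ((p : ℝ) - 1) * ((p : ℝ) + 1) / 6 ↔
      ∃ s₀ : ZMod n,
        S = Finset.image (fun i : Fin m => s₀ + ((p * i.val : ℕ) : ZMod n)) Finset.univ) := by
  classical
  have hS : S.Nonempty := Finset.card_pos.1 (by rw [hcard]; omega)
  have hmemF : ∀ i : {x // x ∈ Sᶜ}, (i : ZMod n) ∉ S := fun i => Finset.mem_compl.1 i.2
  subst hLF
  set c : {x // x ∈ Sᶜ} → ZMod n := fun i => (i : ZMod n) with hc
  set MF : Matrix {x // x ∈ Sᶜ} {x // x ∈ Sᶜ} ℝ :=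
    Matrix.of (fun i j => Stmt16Aux.MM S (c i) (c j)) with hMF
  -- the product identity
  have hprod : L.submatrix c c * MF = 1 := by
    ext i j
    rw [Matrix.mul_apply, Matrix.one_apply]
    have step1 : ∑ k : {x // x ∈ Sᶜ}, L.submatrix c c i k * MF k j
        = ∑ k ∈ Sᶜ, L (c i) k * Stmt16Aux.MM S k (c j) := by
      rw [← Finset.sum_coe_sort (Sᶜ) (fun k => L (c i) k * Stmt16Aux.MM S k (c j))]
      rfl
    rw [step1,
      Finset.sum_subset (Finset.subset_univ Sᶜ) (fun k _ hk => by
        rw [Stmt16Aux.MM_of_mem_left (by simpa using hk), mul_zero])]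
    have step3 : ∑ k : ZMod n, L (c i) k * Stmt16Aux.MM S k (c j)
        = ∑ k : ZMod n, (if c i = k then (2:ℝ) else if c i - k = 1 ∨ k - c i = 1 then -1 else 0)
            * Stmt16Aux.MM S k (c j) :=
      Finset.sum_congr rfl (fun k _ => by rw [hLdef])
    rw [step3, Stmt16Aux.product_row hS (hmemF i) (hmemF j)]
    by_cases h : i = j
    · rw [if_pos h, if_pos (by rw [h])]
    · rw [if_neg h, if_neg (fun hh => h (Subtype.ext hh))]
  have hinv : (L.submatrix c c)⁻¹ = MF := Matrix.inv_eq_right_inv hprod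
  have hLsymm : ∀ a b : ZMod n, L a b = L b a := by
    intro a b
    rw [hLdef, hLdef]
    by_cases h : a = b
    · simp [h]
    · have h' : ¬ b = a := fun hh => h hh.symm
      rw [if_neg h, if_neg h']
      by_cases h2 : a - b = 1 ∨ b - a = 1
      · rw [if_pos h2, if_pos (Or.symm h2)]
      · rw [if_neg h2, if_neg (fun hh => h2 (Or.symm hh))]
  -- trace formula
  have htr : (L.submatrix c c)⁻¹.trace = ∑ s ∈ S, ((GG S s : ℝ)^2 - 1)/6 := by
    rw [hinv]
    have t1 : MF.trace = ∑ i : {x // x ∈ Sᶜ}, Stmt16Aux.MM S (c i) (c i) := by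
      simp [Matrix.trace, Matrix.diag, hMF]
    rw [t1]
    rw [show (∑ i : {x // x ∈ Sᶜ}, Stmt16Aux.MM S (c i) (c i))
        = ∑ i ∈ Sᶜ, Stmt16Aux.MM S i i from Finset.sum_coe_sort (Sᶜ) (fun i => MM S i i)]
    rw [Finset.sum_subset (Finset.subset_univ Sᶜ) (fun k _ hk => by
      rw [Stmt16Aux.MM_of_mem_left (by simpa using hk)])]
    rw [Stmt16Aux.sum_regroup hS (fun x => Stmt16Aux.MM S x x)]
    exact Finset.sum_congr rfl (fun s hs => Stmt16Aux.arc_diag_sum hS hs)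
  have hsum : ∑ s ∈ S, (GG S s : ℝ) = (m : ℝ) * (p : ℝ) := by
    have hcs := Stmt16Aux.card_eq_sum_GG hS
    rw [← hcs, hn]
    push_cast
    ring
  have hkey := Stmt16Aux.sum_identity hcard hsum
  have hQ : 0 ≤ ∑ s ∈ S, ((GG S s : ℝ) - (p:ℝ))^2 :=
    Finset.sum_nonneg (fun s _ => sq_nonneg _)
  refine ⟨Matrix.posDef_iff_dotProduct_mulVec.mpr ⟨?_, ?_⟩, ?_, ?_⟩
  · -- Hermitian
    ext i j
    simp only [Matrix.conjTranspose_apply, Matrix.submatrix_apply, star_trivial]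
    exact hLsymm (c j) (c i)
  · -- positivity of the quadratic form
    intro x hx
    obtain ⟨i0, hi0⟩ : ∃ i, x i ≠ 0 := by
      by_contra hcon; push_neg at hcon; exact hx (funext hcon)
    set y : ZMod n → ℝ := fun k => if h : k ∈ Sᶜ then x ⟨k, h⟩ else 0 with hy
    have hy0 : ∀ s ∈ S, y s = 0 := fun s hs => dif_neg (by simpa using hs)
    have hyx : ∀ i : {x // x ∈ Sᶜ}, y (c i) = x i := by
      intro i
      simp only [hy]
      rw [dif_pos i.2]
    have hyne : ∃ k, y k ≠ 0 := ⟨c i0, by rw [hyx]; exact hi0⟩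
    have hpos := Stmt16Aux.quad_pos hS y hy0 hyne
    have inner1 : ∀ i : ZMod n,
        ∑ j : ZMod n, y i *
          ((if i = j then (2:ℝ) else if i - j = 1 ∨ j - i = 1 then -1 else 0) * y j)
        = y i * ∑ j : {x // x ∈ Sᶜ}, L i (c j) * x j := by
      intro i
      rw [← Finset.mul_sum]
      congr 1
      calc ∑ j : ZMod n, (if i = j then (2:ℝ) else if i - j = 1 ∨ j - i = 1 then -1 else 0) * y j
          = ∑ j : ZMod n, L i j * y j :=
            Finset.sum_congr rfl (fun j _ => by rw [hLdef])
        _ = ∑ j ∈ Sᶜ, L i j * y j :=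
            (Finset.sum_subset (Finset.subset_univ Sᶜ) (fun k _ hk => by
              rw [show y k = 0 from hy0 k (by simpa using hk), mul_zero])).symm
        _ = ∑ j : {x // x ∈ Sᶜ}, L i (c j) * y (c j) :=
            (Finset.sum_coe_sort (Sᶜ) (fun j => L i j * y j)).symm
        _ = ∑ j : {x // x ∈ Sᶜ}, L i (c j) * x j :=
            Finset.sum_congr rfl (fun j _ => by rw [hyx])
    have outer : ∑ i : ZMod n, (y i * ∑ j : {x // x ∈ Sᶜ}, L i (c j) * x j)
        = ∑ i : {x // x ∈ Sᶜ}, (x i * ∑ j : {x // x ∈ Sᶜ}, L (c i) (c j) * x j) := by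
      calc ∑ i : ZMod n, (y i * ∑ j : {x // x ∈ Sᶜ}, L i (c j) * x j)
          = ∑ i ∈ Sᶜ, (y i * ∑ j : {x // x ∈ Sᶜ}, L i (c j) * x j) :=
            (Finset.sum_subset (Finset.subset_univ Sᶜ) (fun k _ hk => by
              rw [show y k = 0 from hy0 k (by simpa using hk), zero_mul])).symm
        _ = ∑ i : {x // x ∈ Sᶜ}, (y (c i) * ∑ j : {x // x ∈ Sᶜ}, L (c i) (c j) * x j) :=
            (Finset.sum_coe_sort (Sᶜ) (fun i => y i * ∑ j : {x // x ∈ Sᶜ}, L i (c j) * x j)).symm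
        _ = ∑ i : {x // x ∈ Sᶜ}, (x i * ∑ j : {x // x ∈ Sᶜ}, L (c i) (c j) * x j) :=
            Finset.sum_congr rfl (fun i _ => by rw [hyx])
    have dot_eq : star x ⬝ᵥ (L.submatrix c c).mulVec x
        = ∑ i : {x // x ∈ Sᶜ}, (x i * ∑ j : {x // x ∈ Sᶜ}, L (c i) (c j) * x j) := by
      simp only [dotProduct, Matrix.mulVec, Matrix.submatrix_apply, Pi.star_apply,
        star_trivial]
    rw [dot_eq, ← outer]
    calc (0:ℝ) < ∑ i : ZMod n, ∑ j : ZMod n, y i *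
          ((if i = j then (2:ℝ) else if i - j = 1 ∨ j - i = 1 then -1 else 0) * y j) := hpos
      _ = ∑ i : ZMod n, (y i * ∑ j : {x // x ∈ Sᶜ}, L i (c j) * x j) :=
          Finset.sum_congr rfl (fun i _ => inner1 i)
  · -- the trace lower bound
    rw [htr, hkey]
    linarith
  · -- equality characterisation
    rw [htr, hkey, ← Stmt16Aux.gaps_iff_image hm hp hn hcard hS]
    constructor
    · intro heq
      have hQ0 : ∑ s ∈ S, ((GG S s : ℝ) - (p:ℝ))^2 = 0 := by linarith
      intro s hs
      have h1 := (Finset.sum_eq_zero_iff_of_nonneg (fun s _ => sq_nonneg _)).1 hQ0 s hs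
      have h2 := sub_eq_zero.1 (sq_eq_zero_iff.1 h1)
      exact_mod_cast h2
    · intro hgap
      have hz : ∑ s ∈ S, ((GG S s : ℝ) - (p:ℝ))^2 = 0 :=
        Finset.sum_eq_zero (fun s hs => by rw [hgap s hs]; ring)
      rw [hz]
      ring
end
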